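/- arXiv:math/0305092 — 4 statements merged into one kernel-verified Lean document; each statement's English description precedes it below -/
import Mathlib

section
/- Let 0 < α ≤ 2, H > 0 and H' = H − 1/α with H' > −1/2. Let ℓ be a nonnegative integer with ℓ > H, let D > 0, and let ψ: ℝ → ℝ be an ℓ-times continuously differentiable function supported in [−D, D] whose moments vanish up to order ℓ, i.e. ∫_ℝ t^k ψ(t) dt = 0 for all 0 ≤ k ≤ ℓ. For each positive integer n set τ_n^α = ∫_0^∞ | ∫_ℝ (u + n − s)_+^{H'} ψ(u) du |^α ds, where x_+^{H'} denotes x^{H'} for x > 0 and 0 for x ≤ 0. Then sup_{n ≥ 1} τ_n < +∞. -/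
open MeasureTheory Filter Set
open scoped ENNReal NNReal Topology

/-- `posPow x e = x^e` for `x > 0` and `0` for `x ≤ 0` (the function `x ↦ x₊^e`). -/
noncomputable def posPow (x e : ℝ) : ℝ := if 0 < x then x ^ e else 0

lemma posPow_eq (e : ℝ) : (fun x => posPow x e) = (Set.Ioi (0:ℝ)).indicator (fun x => x ^ e) := by
  funext x; simp only [posPow, Set.indicator, Set.mem_Ioi]

lemma posPow_nonneg (x e : ℝ) : 0 ≤ posPow x e := by
  unfold posPow; split
  · exact Real.rpow_nonneg (le_of_lt ‹_›) _
  · exact le_refl _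

lemma measurable_posPow (e : ℝ) : Measurable fun x => posPow x e := by
  rw [posPow_eq]
  exact (measurable_id.pow_const e).indicator measurableSet_Ioi

lemma intervalIntegrable_posPow {e : ℝ} (he : -1 < e) (a b : ℝ) :
    IntervalIntegrable (fun x => posPow x e) volume a b := by
  rw [posPow_eq]
  obtain ⟨h1, h2⟩ := intervalIntegral.intervalIntegrable_rpow' he (a := a) (b := b)
  exact ⟨h1.indicator measurableSet_Ioi, h2.indicator measurableSet_Ioi⟩

lemma integrableOn_posPow_shift {e : ℝ} (he : -1 < e) (c a b : ℝ) :
    IntegrableOn (fun u => posPow (u + c) e) (Set.Icc a b) := by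
  have h := (intervalIntegrable_posPow he (a + c) (b + c)).comp_add_right c
  rw [add_sub_cancel_right, add_sub_cancel_right] at h
  rcases le_or_gt a b with hab | hab
  · rw [integrableOn_Icc_iff_integrableOn_Ioc]
    exact (intervalIntegrable_iff_integrableOn_Ioc_of_le hab).mp h
  · rw [Set.Icc_eq_empty (not_le.mpr hab)]
    exact integrableOn_empty

lemma integrable_kernel {e : ℝ} (he : -1 < e) {ψ : ℝ → ℝ} {D Cψ : ℝ}
    (hψc : Continuous ψ) (hsupp : Function.support ψ ⊆ Set.Icc (-D) D)
    (hCψ : ∀ u, |ψ u| ≤ Cψ) (c : ℝ) :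
    Integrable (fun u => posPow (u + c) e * ψ u) := by
  have hmeas : AEStronglyMeasurable (fun u => posPow (u + c) e * ψ u) volume :=
    (((measurable_posPow e).comp (measurable_add_const c)).mul hψc.measurable).aestronglyMeasurable
  have hgint : Integrable ((Set.Icc (-D) D).indicator (fun u => Cψ * posPow (u + c) e)) := by
    exact MeasureTheory.IntegrableOn.integrable_indicator
      ((integrableOn_posPow_shift he c (-D) D).const_mul Cψ) measurableSet_Icc
  refine hgint.mono' hmeas (Filter.Eventually.of_forall fun u => ?_)
  by_cases hu : u ∈ Set.Icc (-D) D
  · rw [Set.indicator_of_mem hu]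
    rw [Real.norm_eq_abs, abs_mul, abs_of_nonneg (posPow_nonneg _ _), mul_comm]
    exact mul_le_mul_of_nonneg_right (hCψ u) (posPow_nonneg _ _)
  · have : ψ u = 0 := by
      by_contra h
      exact hu (hsupp (Function.mem_support.mpr h))
    rw [Set.indicator_of_notMem hu, this, mul_zero, norm_zero]

lemma iteratedDerivWithin_rpow (p a b : ℝ) (ha : 0 < a) (hab : a < b) (m : ℕ) :
    ∀ y ∈ Set.Icc a b, iteratedDerivWithin m (fun y : ℝ => y ^ p) (Set.Icc a b) y
      = (∏ j ∈ Finset.range m, (p - j)) * y ^ (p - m) := by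
  induction m with
  | zero =>
      intro y hy
      simp [iteratedDerivWithin_zero]
  | succ m IH =>
      intro y hy
      have hud : UniqueDiffOn ℝ (Set.Icc a b) := uniqueDiffOn_Icc hab
      rw [iteratedDerivWithin_succ]
      have hcongr : derivWithin (iteratedDerivWithin m (fun y : ℝ => y ^ p) (Set.Icc a b))
          (Set.Icc a b) y
          = derivWithin (fun y : ℝ => (∏ j ∈ Finset.range m, (p - j)) * y ^ (p - m))
            (Set.Icc a b) y :=
        derivWithin_congr (fun z hz => IH z hz) (IH y hy)
      rw [hcongr]
      have hy0 : y ≠ 0 := ne_of_gt (lt_of_lt_of_le ha hy.1)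
      have hder : HasDerivAt (fun y : ℝ => (∏ j ∈ Finset.range m, (p - j)) * y ^ (p - m))
          ((∏ j ∈ Finset.range m, (p - j)) * ((p - m) * y ^ (p - m - 1))) y :=
        (Real.hasDerivAt_rpow_const (Or.inl hy0)).const_mul _
      rw [hder.differentiableAt.derivWithin (hud y hy), hder.deriv]
      rw [Finset.prod_range_succ]
      rw [show p - (↑(m+1) : ℝ) = p - m - 1 by push_cast; ring, mul_assoc]


lemma taylor_remainder_rpow {p a b : ℝ} {m : ℕ} (ha : 0 < a) (hab : a < b)
    (hp : p - (m + 1 : ℕ) ≤ 0) :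
    ∀ x ∈ Set.Icc a b, |x ^ p - taylorWithinEval (fun y : ℝ => y ^ p) m (Set.Icc a b) a x|
      ≤ (|∏ j ∈ Finset.range (m+1), (p - j)| * a ^ (p - (m+1 : ℕ))) * (x - a) ^ (m+1)
        / m.factorial := by
  intro x hx
  have hf : ContDiffOn ℝ (m + 1) (fun y : ℝ => y ^ p) (Set.Icc a b) := fun y hy =>
    (Real.contDiffAt_rpow_const_of_ne (ne_of_gt (lt_of_lt_of_le ha hy.1))).contDiffWithinAt
  have hC : ∀ y ∈ Set.Icc a b,
      ‖iteratedDerivWithin (m + 1) (fun y : ℝ => y ^ p) (Set.Icc a b) y‖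
        ≤ |∏ j ∈ Finset.range (m+1), (p - j)| * a ^ (p - (m+1 : ℕ)) := by
    intro y hy
    rw [iteratedDerivWithin_rpow p a b ha hab (m+1) y hy, Real.norm_eq_abs, abs_mul,
      abs_of_nonneg (Real.rpow_nonneg (le_of_lt (lt_of_lt_of_le ha hy.1)) _)]
    exact mul_le_mul_of_nonneg_left
      (Real.rpow_le_rpow_of_nonpos ha hy.1 hp) (abs_nonneg _)
  have := taylor_mean_remainder_bound hab.le hf hx hC
  simpa using this

section
variable {ψ : ℝ → ℝ} {ℓ : ℕ}

lemma integrable_pow_shift_mul (hψc : Continuous ψ) (hψcs : HasCompactSupport ψ)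
    (k : ℕ) (e : ℝ) : Integrable (fun u : ℝ => (u + e) ^ k * ψ u) := by
  refine Continuous.integrable_of_hasCompactSupport
    (((continuous_id.add continuous_const).pow k).mul hψc) ?_
  exact hψcs.mul_left

lemma moment_shift (hψc : Continuous ψ) (hψcs : HasCompactSupport ψ)
    (hmom : ∀ k : ℕ, k ≤ ℓ → ∫ t : ℝ, t ^ k * ψ t = 0) :
    ∀ k : ℕ, k ≤ ℓ → ∀ e : ℝ, ∫ u : ℝ, (u + e) ^ k * ψ u = 0 := by
  intro k hk e
  have hpoly : ∀ j : ℕ, Integrable (fun u : ℝ => u ^ j * ψ u) := by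
    intro j
    simpa using integrable_pow_shift_mul hψc hψcs j 0
  have hrw : (fun u : ℝ => (u + e) ^ k * ψ u)
      = fun u : ℝ => ∑ j ∈ Finset.range (k + 1),
          (e ^ (k - j) * (k.choose j : ℝ)) * (u ^ j * ψ u) := by
    funext u
    rw [add_pow, Finset.sum_mul]
    exact Finset.sum_congr rfl fun j _ => by ring
  rw [hrw, integral_finset_sum _ fun j _ => (hpoly j).const_mul _]
  refine Finset.sum_eq_zero fun j hj => ?_
  rw [integral_const_mul,
    hmom j (le_trans (Nat.lt_succ_iff.mp (Finset.mem_range.mp hj)) hk), mul_zero]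

end

/-- Uniform bound on the scale factors of the renormalized wavelet coefficients of the
Riemann–Liouville process: with `H' = H - 1/α > -1/2` and a `Cℓ` wavelet `ψ` supported in
`[-D,D]` with vanishing moments up to order `ℓ > H`, one has
`sup_{n ≥ 1} τ_n < ∞`, where `τ_n^α = ∫_0^∞ |∫ (u+n-s)₊^{H'} ψ(u) du|^α ds`. -/
theorem sup_wavelet_scale_finite (α H D : ℝ) (ℓ : ℕ) (ψ : ℝ → ℝ)
    (hα : 0 < α) (hα2 : α ≤ 2) (hH : 0 < H) (hH' : -(1/2) < H - 1/α)
    (hℓ : H < ℓ) (hD : 0 < D)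
    (hψ : ContDiff ℝ ℓ ψ) (hsupp : Function.support ψ ⊆ Set.Icc (-D) D)
    (hmom : ∀ k : ℕ, k ≤ ℓ → ∫ t : ℝ, t ^ k * ψ t = 0) :
    (⨆ (n : ℕ) (_ : 1 ≤ n),
      ∫⁻ s in Set.Ioi (0:ℝ),
        ENNReal.ofReal (|∫ u : ℝ, posPow (u + n - s) (H - 1/α) * ψ u| ^ α)) < ⊤ := by
  have hψcont : Continuous ψ := hψ.continuous
  have hψcs : HasCompactSupport ψ := by
    refine HasCompactSupport.intro (isCompact_Icc (a := -D) (b := D)) fun x hx => ?_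
    by_contra h
    exact hx (hsupp (Function.mem_support.mpr h))
  obtain ⟨C₀, hC₀⟩ := hψcs.exists_bound_of_continuous hψcont
  set Cψ : ℝ := max C₀ 0 with hCψdef
  have hCψ : ∀ u, |ψ u| ≤ Cψ := fun u => le_trans (by rw [← Real.norm_eq_abs]; exact hC₀ u)
    (le_max_left _ _)
  have hCψ0 : 0 ≤ Cψ := le_max_right _ _
  -- basic numeric facts
  have hαne : α ≠ 0 := ne_of_gt hα
  have h1α : 0 < 1/α := by positivity
  have he : (-1 : ℝ) < H - 1/α := by linarith
  obtain ⟨m, hm⟩ : ∃ m : ℕ, m + 1 = ℓ := by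
    refine ⟨ℓ - 1, ?_⟩
    have : ℓ ≠ 0 := by
      rintro rfl
      simp at hℓ
      linarith
    omega
  have hmcast : ((m + 1 : ℕ) : ℝ) = (ℓ : ℝ) := by exact_mod_cast congrArg (Nat.cast (R := ℝ)) hm
  set q : ℝ := H - 1/α - (m + 1 : ℕ) with hqdef
  have hq0 : q ≤ 0 := by rw [hqdef, hmcast]; linarith
  have hqα : q * α < -1 := by
    have h1 : q * α = (H - (ℓ:ℝ)) * α - 1 := by
      rw [hqdef, hmcast]; field_simp; ring
    have h2 : (H - (ℓ:ℝ)) * α < 0 := mul_neg_of_neg_of_pos (by linarith) hα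
    linarith
  -- constants
  set Cd : ℝ := |∏ j ∈ Finset.range (m+1), (H - 1/α - (j:ℝ))| with hCddef
  have hCd0 : 0 ≤ Cd := abs_nonneg _
  set I₀ : ℝ := ∫ x in Set.Icc (-(2*D)) (3*D), posPow x (H - 1/α) with hI₀def
  have hI₀int : IntegrableOn (fun x => posPow x (H - 1/α)) (Set.Icc (-(2*D)) (3*D)) := by
    have := integrableOn_posPow_shift he 0 (-(2*D)) (3*D)
    simpa using this
  have hI₀0 : 0 ≤ I₀ :=
    setIntegral_nonneg measurableSet_Icc fun x _ => posPow_nonneg _ _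
  set B₀ : ℝ := Cψ * I₀ with hB₀def
  have hB₀0 : 0 ≤ B₀ := mul_nonneg hCψ0 hI₀0
  set K : ℝ := 2*D * (Cψ * (Cd * (2*D)^(m+1) / (m.factorial : ℝ))) with hKdef
  have hK0 : 0 ≤ K := by positivity
  -- the dominating function
  set φ : ℝ → ℝ := fun t => (Set.Ioc (-D) (2*D)).indicator (fun _ => B₀ ^ α) t
      + (Set.Ioi (2*D)).indicator (fun t => K ^ α * (t - D) ^ (q * α)) t with hφdef
  have hφ1 : ∀ t, 0 ≤ (Set.Ioc (-D) (2*D)).indicator (fun _ => B₀ ^ α) t := by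
    intro t
    exact Set.indicator_nonneg (fun _ _ => Real.rpow_nonneg hB₀0 _) t
  have hφ2 : ∀ t, 0 ≤ (Set.Ioi (2*D)).indicator (fun t => K ^ α * (t - D) ^ (q * α)) t := by
    intro t
    refine Set.indicator_nonneg (fun x hx => mul_nonneg (Real.rpow_nonneg hK0 _)
      (Real.rpow_nonneg ?_ _)) t
    have : 2*D < x := hx
    linarith
  have hφ0 : ∀ t, 0 ≤ φ t := fun t => add_nonneg (hφ1 t) (hφ2 t)
  -- pointwise bound
  have claim : ∀ (n : ℕ) (s : ℝ),
      |∫ u : ℝ, posPow (u + n - s) (H - 1/α) * ψ u| ^ α ≤ φ ((n : ℝ) - s) := by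
    intro n s
    set t : ℝ := (n : ℝ) - s with htdef
    have harg : (fun u : ℝ => posPow (u + n - s) (H - 1/α) * ψ u)
        = fun u : ℝ => posPow (u + t) (H - 1/α) * ψ u := by
      funext u; rw [htdef, add_sub_assoc]
    rw [harg]
    rcases le_or_gt t (-D) with hcase | hcase
    · -- zero case : s ≥ n + D
      have hz : ∀ u : ℝ, posPow (u + t) (H - 1/α) * ψ u = 0 := by
        intro u
        by_cases hu : ψ u = 0
        · rw [hu, mul_zero]
        · have hu' := hsupp (Function.mem_support.mpr hu)
          have hnot : ¬ 0 < u + t := by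
            push_neg
            have := hu'.2
            linarith
          rw [posPow, if_neg hnot, zero_mul]
      rw [funext hz, integral_zero, abs_zero, Real.zero_rpow hαne]
      exact hφ0 t
    rcases le_or_gt t (2*D) with hcase2 | hcase2
    · -- middle case : -D < t ≤ 2D
      have hgint : Integrable ((Set.Icc (-D) D).indicator
          (fun u => Cψ * posPow (u + t) (H - 1/α))) :=
        MeasureTheory.IntegrableOn.integrable_indicator
          ((integrableOn_posPow_shift he t (-D) D).const_mul Cψ) measurableSet_Icc
      have hptw : ∀ u : ℝ, ‖posPow (u + t) (H - 1/α) * ψ u‖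
          ≤ (Set.Icc (-D) D).indicator (fun u => Cψ * posPow (u + t) (H - 1/α)) u := by
        intro u
        by_cases hu : u ∈ Set.Icc (-D) D
        · rw [Set.indicator_of_mem hu, Real.norm_eq_abs, abs_mul,
            abs_of_nonneg (posPow_nonneg _ _), mul_comm]
          exact mul_le_mul_of_nonneg_right (hCψ u) (posPow_nonneg _ _)
        · have hu0 : ψ u = 0 := by
            by_contra h; exact hu (hsupp (Function.mem_support.mpr h))
          rw [Set.indicator_of_notMem hu, hu0, mul_zero, norm_zero]
      have h1 := MeasureTheory.norm_integral_le_of_norm_le hgint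
        (Filter.Eventually.of_forall hptw)
      rw [Real.norm_eq_abs] at h1
      have hI : ∫ u in Set.Icc (-D) D, posPow (u + t) (H - 1/α) ≤ I₀ := by
        have e1 : ∫ u in Set.Icc (-D) D, posPow (u + t) (H - 1/α)
            = ∫ u in (-D)..D, posPow (u + t) (H - 1/α) := by
          rw [MeasureTheory.integral_Icc_eq_integral_Ioc,
            intervalIntegral.integral_of_le (by linarith)]
        have e2 : ∫ u in (-D)..D, posPow (u + t) (H - 1/α)
            = ∫ x in (-D + t)..(D + t), posPow x (H - 1/α) :=
          intervalIntegral.integral_comp_add_right (fun x => posPow x (H - 1/α)) t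
        have e3 : ∫ x in (-D + t)..(D + t), posPow x (H - 1/α)
            = ∫ x in Set.Ioc (-D + t) (D + t), posPow x (H - 1/α) :=
          intervalIntegral.integral_of_le (by linarith)
        rw [e1, e2, e3]
        refine setIntegral_mono_set hI₀int
          (Filter.Eventually.of_forall fun x => posPow_nonneg _ _) ?_
        refine HasSubset.Subset.eventuallyLE fun x hx => ?_
        obtain ⟨hx1, hx2⟩ := hx
        exact ⟨by linarith, by linarith⟩
      have hbd : |∫ u : ℝ, posPow (u + t) (H - 1/α) * ψ u| ≤ B₀ := by
        refine le_trans h1 ?_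
        rw [integral_indicator measurableSet_Icc, MeasureTheory.integral_const_mul]
        exact mul_le_mul_of_nonneg_left hI hCψ0
      have h2 : |∫ u : ℝ, posPow (u + t) (H - 1/α) * ψ u| ^ α ≤ B₀ ^ α :=
        Real.rpow_le_rpow (abs_nonneg _) hbd hα.le
      refine le_trans h2 ?_
      have hmem : t ∈ Set.Ioc (-D) (2*D) := ⟨hcase, hcase2⟩
      have : (Set.Ioc (-D) (2*D)).indicator (fun _ : ℝ => B₀ ^ α) t = B₀ ^ α :=
        Set.indicator_of_mem hmem _
      rw [hφdef]
      exact le_trans (le_of_eq this.symm) (le_add_of_nonneg_right (hφ2 t))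
    · -- tail case : 2D < t
      set a : ℝ := t - D with hadef
      set b : ℝ := t + D with hbdef
      have ha0 : 0 < a := by rw [hadef]; linarith
      have hab : a < b := by rw [hadef, hbdef]; linarith
      set f : ℝ → ℝ := fun y => y ^ (H - 1/α) with hfdef
      set T : ℝ → ℝ := taylorWithinEval f m (Set.Icc a b) a with hTdef
      have hsum : (fun u : ℝ => T (u + t) * ψ u)
          = fun u : ℝ => ∑ k ∈ Finset.range (m+1),
              (((k.factorial : ℝ))⁻¹ * iteratedDerivWithin k f (Set.Icc a b) a)
                * ((u + (t - a)) ^ k * ψ u) := by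
        funext u
        rw [hTdef, taylor_within_apply, Finset.sum_mul]
        refine Finset.sum_congr rfl fun k _ => ?_
        rw [smul_eq_mul]
        ring
      have hTint : Integrable (fun u : ℝ => T (u + t) * ψ u) := by
        rw [hsum]
        exact integrable_finset_sum _ fun k _ =>
          (integrable_pow_shift_mul hψcont hψcs k (t - a)).const_mul _
      have hTzero : ∫ u : ℝ, T (u + t) * ψ u = 0 := by
        rw [hsum, integral_finset_sum _ (fun k _ =>
          (integrable_pow_shift_mul hψcont hψcs k (t - a)).const_mul _)]
        refine Finset.sum_eq_zero fun k hk => ?_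
        rw [integral_const_mul, moment_shift hψcont hψcs hmom k ?_ (t - a), mul_zero]
        have := Finset.mem_range.mp hk
        omega
      have hkint : Integrable (fun u : ℝ => posPow (u + t) (H - 1/α) * ψ u) :=
        integrable_kernel he hψcont hsupp hCψ t
      have heqf : (fun u : ℝ => posPow (u + t) (H - 1/α) * ψ u)
          = fun u : ℝ => f (u + t) * ψ u := by
        funext u
        by_cases hu : ψ u = 0
        · rw [hu, mul_zero, mul_zero]
        · have hu' := hsupp (Function.mem_support.mpr hu)
          have hpos : 0 < u + t := by
            have := hu'.1
            linarith
          rw [posPow, if_pos hpos]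
      have hsplit : ∫ u : ℝ, posPow (u + t) (H - 1/α) * ψ u
          = ∫ u : ℝ, (f (u + t) - T (u + t)) * ψ u := by
        have hfψint : Integrable (fun u : ℝ => f (u + t) * ψ u) := heqf ▸ hkint
        have h1 : (fun u : ℝ => (f (u + t) - T (u + t)) * ψ u)
            = fun u : ℝ => f (u + t) * ψ u - T (u + t) * ψ u := by
          funext u; ring
        rw [heqf, h1, integral_sub hfψint hTint, hTzero, sub_zero]
      set R : ℝ := Cd * a ^ q * (2*D)^(m+1) / (m.factorial : ℝ) with hRdef
      have haq0 : (0:ℝ) ≤ a ^ q := Real.rpow_nonneg ha0.le _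
      have hR0 : 0 ≤ R := by positivity
      have hrem : ∀ x ∈ Set.Icc a b, |f x - T x| ≤ R := by
        intro x hx
        refine le_trans (taylor_remainder_rpow ha0 hab hq0 x hx) ?_
        rw [hRdef]
        have hxa1 : (0:ℝ) ≤ x - a := sub_nonneg.mpr hx.1
        have hxa2 : x - a ≤ 2*D := by
          have := hx.2
          rw [hbdef, hadef] at *
          linarith
        gcongr
      have hptw : ∀ u : ℝ, ‖(f (u + t) - T (u + t)) * ψ u‖
          ≤ (Set.Icc (-D) D).indicator (fun _ : ℝ => Cψ * R) u := by
        intro u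
        by_cases hu : u ∈ Set.Icc (-D) D
        · rw [Set.indicator_of_mem hu, Real.norm_eq_abs, abs_mul]
          have hx : u + t ∈ Set.Icc a b := by
            constructor
            · rw [hadef]; have := hu.1; linarith
            · rw [hbdef]; have := hu.2; linarith
          calc |f (u + t) - T (u + t)| * |ψ u| ≤ R * Cψ :=
                mul_le_mul (hrem _ hx) (hCψ u) (abs_nonneg _) hR0
            _ = Cψ * R := mul_comm _ _
        · have hu0 : ψ u = 0 := by
            by_contra h; exact hu (hsupp (Function.mem_support.mpr h))
          rw [Set.indicator_of_notMem hu, hu0, mul_zero, norm_zero]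
      have hgint : Integrable ((Set.Icc (-D) D).indicator (fun _ : ℝ => Cψ * R)) :=
        MeasureTheory.IntegrableOn.integrable_indicator
          (integrableOn_const measure_Icc_lt_top.ne) measurableSet_Icc
      have hbd : |∫ u : ℝ, posPow (u + t) (H - 1/α) * ψ u| ≤ K * a ^ q := by
        rw [hsplit]
        have h1 := MeasureTheory.norm_integral_le_of_norm_le hgint
          (Filter.Eventually.of_forall hptw)
        rw [Real.norm_eq_abs] at h1
        refine le_trans h1 ?_
        rw [MeasureTheory.integral_indicator_const _ measurableSet_Icc, measureReal_def, Real.volume_Icc,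
          smul_eq_mul]
        rw [ENNReal.toReal_ofReal (by linarith : (0:ℝ) ≤ D - -D)]
        rw [hKdef, hRdef]
        refine le_of_eq ?_
        field_simp
        ring
      have h2 : |∫ u : ℝ, posPow (u + t) (H - 1/α) * ψ u| ^ α ≤ K ^ α * a ^ (q * α) := by
        refine le_trans (Real.rpow_le_rpow (abs_nonneg _) hbd hα.le) ?_
        rw [Real.mul_rpow hK0 haq0, ← Real.rpow_mul ha0.le]
      refine le_trans h2 ?_
      have hmem : t ∈ Set.Ioi (2*D) := hcase2
      have hind : (Set.Ioi (2*D)).indicator (fun x : ℝ => K ^ α * (x - D) ^ (q * α)) t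
          = K ^ α * a ^ (q * α) := by
        rw [Set.indicator_of_mem hmem]
      rw [hφdef]
      exact le_trans (le_of_eq hind.symm) (le_add_of_nonneg_left (hφ1 t))
  -- measurability and integrability of φ
  have hφmeas : Measurable fun t : ℝ => ENNReal.ofReal (φ t) := by
    apply Measurable.ennreal_ofReal
    rw [hφdef]
    refine Measurable.add ?_ ?_
    · exact measurable_const.indicator measurableSet_Ioc
    · exact ((measurable_id.sub_const D).pow_const (q * α)).const_mul (K ^ α)
        |>.indicator measurableSet_Ioi
  have hφint : Integrable φ := by
    rw [hφdef]
    refine Integrable.add ?_ ?_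
    · exact (integrable_indicator_iff measurableSet_Ioc).mpr
        (integrableOn_const measure_Ioc_lt_top.ne)
    · have hg₀ : Integrable ((Set.Ioi D).indicator fun x : ℝ => x ^ (q * α)) :=
        (integrable_indicator_iff measurableSet_Ioi).mpr (integrableOn_Ioi_rpow_of_lt hqα hD)
      have hg₁ := (hg₀.comp_sub_right D).const_mul (K ^ α)
      refine hg₁.congr (Filter.Eventually.of_forall fun x => ?_)
      by_cases hx : x ∈ Set.Ioi (2*D)
      · have hx' : x - D ∈ Set.Ioi D := by
          have : 2*D < x := hx
          simp only [Set.mem_Ioi]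
          linarith
        simp only [Set.indicator_of_mem hx, Set.indicator_of_mem hx']
      · have hx' : x - D ∉ Set.Ioi D := by
          simp only [Set.mem_Ioi, not_lt] at hx ⊢
          linarith
        simp only [Set.indicator_of_notMem hx, Set.indicator_of_notMem hx', mul_zero]
  have hfin : (∫⁻ t : ℝ, ENNReal.ofReal (φ t)) < ⊤ := hφint.lintegral_lt_top
  refine lt_of_le_of_lt ?_ hfin
  refine iSup_le fun n => iSup_le fun _ => ?_
  calc ∫⁻ s in Set.Ioi (0:ℝ),
        ENNReal.ofReal (|∫ u : ℝ, posPow (u + n - s) (H - 1/α) * ψ u| ^ α)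
      ≤ ∫⁻ s in Set.Ioi (0:ℝ), ENNReal.ofReal (φ ((n:ℝ) - s)) :=
        lintegral_mono fun s => ENNReal.ofReal_le_ofReal (claim n s)
    _ ≤ ∫⁻ s : ℝ, ENNReal.ofReal (φ ((n:ℝ) - s)) := setLIntegral_le_lintegral _ _
    _ = ∫⁻ t : ℝ, ENNReal.ofReal (φ t) :=
        (Measure.measurePreserving_sub_left volume ((n:ℕ):ℝ)).lintegral_comp hφmeas
end

section
/- Let 0 < α ≤ 2, 0 < H < 2 and H' = H − 1/α. Then there exists a constant C > 0 (depending only on α and H) such that for every integer j ≥ 0 and every integer 1 ≤ n ≤ 2^j, writing t⁰ = (n−1)·2^{−j}, t¹ = (n−1/2)·2^{−j}, t² = n·2^{−j}, one has ∫_0^∞ | 2·(t¹ − s)_+^{H'} − (t⁰ − s)_+^{H'} − (t² − s)_+^{H'} |^α ds ≤ C·2^{−αHj}, where x_+^{H'} denotes x^{H'} for x > 0 and 0 for x ≤ 0. -/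
open MeasureTheory Filter Set
open scoped ENNReal NNReal Topology

lemma posPow_of_pos {x : ℝ} (h : 0 < x) (e : ℝ) : posPow x e = x ^ e := if_pos h

lemma posPow_of_nonpos {x : ℝ} (h : x ≤ 0) (e : ℝ) : posPow x e = 0 := if_neg (not_lt.2 h)

lemma posPow_rpow {α : ℝ} (hα : α ≠ 0) (x e : ℝ) : posPow x e ^ α = posPow x (e * α) := by
  by_cases h : 0 < x
  · rw [posPow_of_pos h, posPow_of_pos h, Real.rpow_mul h.le]
  · rw [posPow_of_nonpos (not_lt.1 h), posPow_of_nonpos (not_lt.1 h), Real.zero_rpow hα]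

lemma lint_near {p : ℝ} (hp : -1 < p) (t a b : ℝ) (hb : 0 < b) (htab : t ≤ a + b) :
    ∫⁻ s in Set.Ioi a, ENNReal.ofReal (posPow (t - s) p)
      ≤ ENNReal.ofReal (b ^ (p + 1) / (p + 1)) := by
  have hmp : MeasurePreserving (fun s : ℝ => t - s) volume volume :=
    Measure.measurePreserving_sub_left volume t
  have hemb : MeasurableEmbedding (fun s : ℝ => t - s) :=
    (MeasurableEquiv.subLeft t).measurableEmbedding
  have h1 : ∫⁻ s in Set.Ioi a, ENNReal.ofReal (posPow (t - s) p)
      = ∫⁻ u in Set.Iio (t - a), ENNReal.ofReal (posPow u p) := by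
    rw [hmp.setLIntegral_comp_emb hemb (fun u => ENNReal.ofReal (posPow u p)) (Set.Ioi a),
      Set.image_const_sub_Ioi]
  rw [h1]
  have h2 : ∫⁻ u in Set.Iio (t - a), ENNReal.ofReal (posPow u p)
      ≤ ∫⁻ u, (Set.Ioo (0:ℝ) b).indicator (fun u => ENNReal.ofReal (posPow u p)) u := by
    refine le_trans (setLIntegral_mono
      (((measurable_posPow p).ennreal_ofReal).indicator measurableSet_Ioo) ?_)
      (setLIntegral_le_lintegral _ _)
    intro u hu
    by_cases h0 : 0 < u
    · have : u ∈ Set.Ioo (0:ℝ) b := ⟨h0, lt_of_lt_of_le (by simpa using hu) (by linarith)⟩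
      rw [Set.indicator_of_mem this]
    · rw [posPow_of_nonpos (not_lt.1 h0)]
      simp
  refine le_trans h2 ?_
  rw [lintegral_indicator measurableSet_Ioo]
  have h3 : ∫⁻ u in Set.Ioo (0:ℝ) b, ENNReal.ofReal (posPow u p)
      = ∫⁻ u in Set.Ioo (0:ℝ) b, ENNReal.ofReal (u ^ p) := by
    refine setLIntegral_congr_fun measurableSet_Ioo ?_
    intro u hu
    beta_reduce
    rw [posPow_of_pos hu.1]
  rw [h3]
  have hint : IntegrableOn (fun u : ℝ => u ^ p) (Set.Ioo 0 b) :=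
    (intervalIntegral.intervalIntegrable_rpow' hp (a := 0) (b := b)).1.mono_set
      Set.Ioo_subset_Ioc_self
  have hnn : 0 ≤ᵐ[volume.restrict (Set.Ioo (0:ℝ) b)] fun u : ℝ => u ^ p :=
    (ae_restrict_iff' measurableSet_Ioo).2 (Filter.Eventually.of_forall fun u hu =>
      Real.rpow_nonneg hu.1.le p)
  rw [← ofReal_integral_eq_lintegral_ofReal hint hnn]
  apply ENNReal.ofReal_le_ofReal
  have : ∫ u in Set.Ioo (0:ℝ) b, u ^ p = b ^ (p + 1) / (p + 1) := by
    rw [← integral_Ioc_eq_integral_Ioo, ← intervalIntegral.integral_of_le hb.le,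
      integral_rpow (Or.inl hp), Real.zero_rpow (by linarith), sub_zero]
  rw [this]

lemma lint_far {q : ℝ} (hq : q < -1) (t a h : ℝ) (hh : 0 < h) (hta : a + h ≤ t) :
    ∫⁻ s in Set.Ioc (0:ℝ) a, ENNReal.ofReal (posPow (t - s) q)
      ≤ ENNReal.ofReal (h ^ (q + 1) / (-(q + 1))) := by
  rcases le_or_gt a 0 with ha | ha
  · rw [Set.Ioc_eq_empty (by exact fun hlt => absurd (lt_of_lt_of_le hlt ha) (lt_irrefl 0))]
    simp
  · have hta' : h ≤ t - a := by linarith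
    have htpos : ∀ s ∈ Set.Icc (0:ℝ) a, 0 < t - s := fun s hs => by
      have := hs.2; linarith
    have hcont : ContinuousOn (fun s : ℝ => (t - s) ^ q) (Set.Icc 0 a) := by
      intro s hs
      exact ((Real.continuousAt_rpow_const (t - s) q (Or.inl (htpos s hs).ne')).comp
        ((continuous_const.sub continuous_id).continuousAt)).continuousWithinAt
    have hint : IntegrableOn (fun s : ℝ => (t - s) ^ q) (Set.Ioc 0 a) :=
      (hcont.integrableOn_compact isCompact_Icc).mono_set Set.Ioc_subset_Icc_self
    have hcg : ∫⁻ s in Set.Ioc (0:ℝ) a, ENNReal.ofReal (posPow (t - s) q)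
        = ∫⁻ s in Set.Ioc (0:ℝ) a, ENNReal.ofReal ((t - s) ^ q) := by
      refine setLIntegral_congr_fun measurableSet_Ioc ?_
      intro s hs
      beta_reduce
      rw [posPow_of_pos (htpos s (Set.Ioc_subset_Icc_self hs))]
    have hnn : 0 ≤ᵐ[volume.restrict (Set.Ioc (0:ℝ) a)] fun s : ℝ => (t - s) ^ q :=
      (ae_restrict_iff' measurableSet_Ioc).2 (Filter.Eventually.of_forall fun s hs =>
        Real.rpow_nonneg (htpos s (Set.Ioc_subset_Icc_self hs)).le q)
    rw [hcg, ← ofReal_integral_eq_lintegral_ofReal hint hnn]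
    apply ENNReal.ofReal_le_ofReal
    have h0uIcc : (0:ℝ) ∉ Set.uIcc (t - a) t := by
      rw [Set.uIcc_of_le (by linarith)]
      intro h0
      have := h0.1; linarith
    have hval : ∫ s in Set.Ioc (0:ℝ) a, (t - s) ^ q
        = (t ^ (q + 1) - (t - a) ^ (q + 1)) / (q + 1) := by
      rw [← intervalIntegral.integral_of_le ha.le,
        intervalIntegral.integral_comp_sub_left (fun u : ℝ => u ^ q) t, sub_zero,
        integral_rpow (Or.inr ⟨by intro hc; rw [hc] at hq; exact lt_irrefl _ hq, h0uIcc⟩)]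
    rw [hval]
    have hq1 : q + 1 < 0 := by linarith
    have e1 : (t ^ (q + 1) - (t - a) ^ (q + 1)) / (q + 1)
        = ((t - a) ^ (q + 1) - t ^ (q + 1)) / (-(q + 1)) := by
      rw [div_eq_div_iff (by linarith) (by linarith)]; ring
    rw [e1]
    have hb1 : (t - a) ^ (q + 1) - t ^ (q + 1) ≤ h ^ (q + 1) := by
      have h1 : (t - a) ^ (q + 1) ≤ h ^ (q + 1) :=
        Real.rpow_le_rpow_of_nonpos hh hta' hq1.le
      have h2 : 0 ≤ t ^ (q + 1) := Real.rpow_nonneg (by linarith) _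
      linarith
    gcongr
    linarith

lemma second_diff_bound {e u h : ℝ} (he : e ≤ 2) (hu : 0 < u) (hh : 0 < h) :
    |2 * (u + h / 2) ^ e - u ^ e - (u + h) ^ e|
      ≤ |e| * |e - 1| * (h * h) * u ^ (e - 2) := by
  have hD : ∀ x : ℝ, 0 < x → HasDerivAt (fun y : ℝ => y ^ e) (e * x ^ (e - 1)) x :=
    fun x hx => Real.hasDerivAt_rpow_const (Or.inl hx.ne')
  have hD' : ∀ x : ℝ, 0 < x →
      HasDerivAt (fun y : ℝ => y ^ (e - 1)) ((e - 1) * x ^ (e - 1 - 1)) x :=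
    fun x hx => Real.hasDerivAt_rpow_const (Or.inl hx.ne')
  -- MVT on [u, u + h/2]
  have h1 : u < u + h / 2 := by linarith
  have h2 : u + h / 2 < u + h := by linarith
  obtain ⟨c₁, hc₁, hc₁'⟩ := exists_hasDerivAt_eq_slope (fun y : ℝ => y ^ e)
    (fun x => e * x ^ (e - 1)) h1
    (fun x hx => ((hD x (lt_of_lt_of_le hu hx.1)).continuousAt).continuousWithinAt)
    (fun x hx => hD x (lt_trans hu hx.1))
  obtain ⟨c₂, hc₂, hc₂'⟩ := exists_hasDerivAt_eq_slope (fun y : ℝ => y ^ e)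
    (fun x => e * x ^ (e - 1)) h2
    (fun x hx => ((hD x (by have := hx.1; linarith)).continuousAt).continuousWithinAt)
    (fun x hx => hD x (by have := hx.1; linarith))
  have hc12 : c₁ < c₂ := lt_trans hc₁.2 hc₂.1
  have hc₁pos : 0 < c₁ := lt_trans hu hc₁.1
  obtain ⟨c₃, hc₃, hc₃'⟩ := exists_hasDerivAt_eq_slope (fun y : ℝ => y ^ (e - 1))
    (fun x => (e - 1) * x ^ (e - 1 - 1)) hc12
    (fun x hx => ((hD' x (lt_of_lt_of_le hc₁pos hx.1)).continuousAt).continuousWithinAt)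
    (fun x hx => hD' x (lt_trans hc₁pos hx.1))
  have hc₃pos : 0 < c₃ := lt_trans hc₁pos hc₃.1
  -- rewrite the second difference
  have hhalf : (0:ℝ) < h / 2 := by linarith
  have key : 2 * (u + h / 2) ^ e - u ^ e - (u + h) ^ e
      = (h / 2) * (e * c₁ ^ (e - 1)) - (h / 2) * (e * c₂ ^ (e - 1)) := by
    have e1 : (h / 2) * (e * c₁ ^ (e - 1)) = (u + h / 2) ^ e - u ^ e := by
      rw [hc₁', show u + h / 2 - u = h / 2 by ring, mul_comm]
      exact div_mul_cancel₀ _ (ne_of_gt hhalf)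
    have e2 : (h / 2) * (e * c₂ ^ (e - 1)) = (u + h) ^ e - (u + h / 2) ^ e := by
      rw [hc₂']
      rw [show u + h - (u + h / 2) = h / 2 by ring, mul_comm]
      exact div_mul_cancel₀ _ (ne_of_gt hhalf)
    rw [e1, e2]; ring
  have key2 : c₁ ^ (e - 1) - c₂ ^ (e - 1) = -((c₂ - c₁) * ((e - 1) * c₃ ^ (e - 1 - 1))) := by
    rw [hc₃', mul_comm, div_mul_cancel₀ _ (ne_of_gt (by linarith : (0:ℝ) < c₂ - c₁))]
    ring
  rw [key]
  have : (h / 2) * (e * c₁ ^ (e - 1)) - (h / 2) * (e * c₂ ^ (e - 1))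
      = -((h / 2) * e * ((c₂ - c₁) * ((e - 1) * c₃ ^ (e - 1 - 1)))) := by
    have : (h / 2) * (e * c₁ ^ (e - 1)) - (h / 2) * (e * c₂ ^ (e - 1))
        = (h / 2) * e * (c₁ ^ (e - 1) - c₂ ^ (e - 1)) := by ring
    rw [this, key2]; ring
  rw [this, abs_neg]
  have hc₃nn : (0:ℝ) ≤ c₃ ^ (e - 1 - 1) := Real.rpow_nonneg hc₃pos.le _
  have habs : |(h / 2) * e * ((c₂ - c₁) * ((e - 1) * c₃ ^ (e - 1 - 1)))|
      = (h / 2) * |e| * ((c₂ - c₁) * (|e - 1| * c₃ ^ (e - 1 - 1))) := by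
    rw [abs_mul, abs_mul, abs_mul, abs_mul, abs_of_pos hhalf, abs_of_pos (by linarith : (0:ℝ) < c₂ - c₁),
      abs_of_nonneg hc₃nn]
  rw [habs]
  have hstep : c₃ ^ (e - 1 - 1) ≤ u ^ (e - 2) := by
    have he2 : e - 1 - 1 = e - 2 := by ring
    rw [he2]
    exact Real.rpow_le_rpow_of_nonpos hu (lt_trans hc₁.1 hc₃.1).le (by linarith)
  have L1 : c₂ - c₁ ≤ h := by
    have := hc₂.2; have := hc₁.1; linarith
  have Xnn : (0:ℝ) ≤ u ^ (e - 2) := Real.rpow_nonneg hu.le _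
  have B : (c₂ - c₁) * (|e - 1| * c₃ ^ (e - 1 - 1)) ≤ h * (|e - 1| * u ^ (e - 2)) :=
    mul_le_mul L1 (mul_le_mul_of_nonneg_left hstep (abs_nonneg _))
      (mul_nonneg (abs_nonneg _) hc₃nn) hh.le
  have C : (h / 2) * |e| * ((c₂ - c₁) * (|e - 1| * c₃ ^ (e - 1 - 1)))
      ≤ (h / 2) * |e| * (h * (|e - 1| * u ^ (e - 2))) :=
    mul_le_mul_of_nonneg_left B (mul_nonneg (by linarith) (abs_nonneg _))
  refine le_trans C ?_
  have eq1 : (h / 2) * |e| * (h * (|e - 1| * u ^ (e - 2)))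
      = (1 / 2) * (|e| * |e - 1| * (h * h) * u ^ (e - 2)) := by ring
  have nn : 0 ≤ |e| * |e - 1| * (h * h) * u ^ (e - 2) :=
    mul_nonneg (mul_nonneg (mul_nonneg (abs_nonneg _) (abs_nonneg _))
      (mul_nonneg hh.le hh.le)) Xnn
  linarith

lemma main_aux (α H : ℝ) (hα : 0 < α) (hH0 : 0 < H) (hH2 : H < 2) (t0 h : ℝ) (hh : 0 < h) :
    ∫⁻ s in Set.Ioi (0:ℝ), ENNReal.ofReal
      (|2 * posPow (t0 + h / 2 - s) (H - 1/α) - posPow (t0 - s) (H - 1/α)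
        - posPow (t0 + h - s) (H - 1/α)| ^ α)
    ≤ ENNReal.ofReal
      ((3 * 4 ^ α * ((2:ℝ) ^ (α * H) / (α * H))
        + (|H - 1/α| * |H - 1/α - 1|) ^ α / (2 * α - α * H)) * h ^ (α * H)) := by
  have hα0 : α ≠ 0 := hα.ne'
  have hαH : 0 < α * H := mul_pos hα hH0
  have hD : 0 < 2 * α - α * H := by nlinarith
  have he2 : H - 1/α ≤ 2 := by
    have : 0 < 1/α := by positivity
    linarith
  have hep : (H - 1/α) * α = α * H - 1 := by field_simp
  have heq : (H - 1/α - 2) * α = α * H - 1 - 2 * α := by field_simp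
  have hp : (-1:ℝ) < α * H - 1 := by linarith
  have hq : α * H - 1 - 2 * α < -1 := by nlinarith
  set K := |H - 1/α| * |H - 1/α - 1| with hK_def
  have hKnn : 0 ≤ K := mul_nonneg (abs_nonneg _) (abs_nonneg _)
  set a := t0 - h with ha_def
  set F : ℝ → ℝ≥0∞ := fun s => ENNReal.ofReal
      (|2 * posPow (t0 + h / 2 - s) (H - 1/α) - posPow (t0 - s) (H - 1/α)
        - posPow (t0 + h - s) (H - 1/α)| ^ α) with hF_def
  have Gmeas : ∀ t r : ℝ, Measurable fun s : ℝ => ENNReal.ofReal (posPow (t - s) r) :=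
    fun t r => ((measurable_posPow r).comp (measurable_const.sub measurable_id)).ennreal_ofReal
  -- Near part
  have hnear_pt : ∀ s : ℝ, F s ≤ ENNReal.ofReal (4 ^ α) *
      (ENNReal.ofReal (posPow (t0 + h / 2 - s) (α * H - 1))
        + ENNReal.ofReal (posPow (t0 - s) (α * H - 1))
        + ENNReal.ofReal (posPow (t0 + h - s) (α * H - 1))) := by
    intro s
    set A := posPow (t0 + h / 2 - s) (H - 1/α) with hA_def
    set B := posPow (t0 - s) (H - 1/α) with hB_def
    set Cc := posPow (t0 + h - s) (H - 1/α) with hC_def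
    have hA : 0 ≤ A := posPow_nonneg _ _
    have hB : 0 ≤ B := posPow_nonneg _ _
    have hC : 0 ≤ Cc := posPow_nonneg _ _
    set M := max A (max B Cc) with hM_def
    have hMA : A ≤ M := le_max_left _ _
    have hMB : B ≤ M := le_max_of_le_right (le_max_left _ _)
    have hMC : Cc ≤ M := le_max_of_le_right (le_max_right _ _)
    have hMnn : 0 ≤ M := le_trans hA hMA
    have habs : |2 * A - B - Cc| ≤ 4 * M := by
      rw [abs_le]; constructor <;> linarith
    have h1 : |2 * A - B - Cc| ^ α ≤ (4 * M) ^ α :=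
      Real.rpow_le_rpow (abs_nonneg _) habs hα.le
    have h2 : (4 * M) ^ α = 4 ^ α * M ^ α := Real.mul_rpow (by norm_num) hMnn
    have h3 : M ^ α ≤ A ^ α + B ^ α + Cc ^ α := by
      have hAa : 0 ≤ A ^ α := Real.rpow_nonneg hA _
      have hBa : 0 ≤ B ^ α := Real.rpow_nonneg hB _
      have hCa : 0 ≤ Cc ^ α := Real.rpow_nonneg hC _
      rcases max_choice A (max B Cc) with hm | hm
      · rw [hM_def, hm]; linarith
      · rcases max_choice B Cc with hm' | hm' <;> rw [hM_def, hm, hm'] <;> linarith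
    have h4 : |2 * A - B - Cc| ^ α ≤ 4 ^ α * (A ^ α + B ^ α + Cc ^ α) := by
      refine le_trans h1 ?_
      rw [h2]
      exact mul_le_mul_of_nonneg_left h3 (Real.rpow_nonneg (by norm_num) _)
    have hAa : A ^ α = posPow (t0 + h / 2 - s) (α * H - 1) := by
      rw [hA_def, posPow_rpow hα0, hep]
    have hBa : B ^ α = posPow (t0 - s) (α * H - 1) := by
      rw [hB_def, posPow_rpow hα0, hep]
    have hCa : Cc ^ α = posPow (t0 + h - s) (α * H - 1) := by
      rw [hC_def, posPow_rpow hα0, hep]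
    calc F s ≤ ENNReal.ofReal (4 ^ α * (A ^ α + B ^ α + Cc ^ α)) :=
          ENNReal.ofReal_le_ofReal h4
      _ = ENNReal.ofReal (4 ^ α) * ENNReal.ofReal (A ^ α + B ^ α + Cc ^ α) :=
          ENNReal.ofReal_mul (Real.rpow_nonneg (by norm_num) _)
      _ = ENNReal.ofReal (4 ^ α) * (ENNReal.ofReal (A ^ α) + ENNReal.ofReal (B ^ α)
            + ENNReal.ofReal (Cc ^ α)) := by
          rw [ENNReal.ofReal_add (by positivity) (Real.rpow_nonneg hC _),
            ENNReal.ofReal_add (Real.rpow_nonneg hA _) (Real.rpow_nonneg hB _)]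
      _ = _ := by rw [hAa, hBa, hCa]
  have near : ∫⁻ s in Set.Ioi a, F s
      ≤ ENNReal.ofReal (3 * 4 ^ α * ((2:ℝ) ^ (α * H) / (α * H)) * h ^ (α * H)) := by
    have step1 : ∫⁻ s in Set.Ioi a, F s ≤ ENNReal.ofReal (4 ^ α) *
        ((∫⁻ s in Set.Ioi a, ENNReal.ofReal (posPow (t0 + h / 2 - s) (α * H - 1)))
          + (∫⁻ s in Set.Ioi a, ENNReal.ofReal (posPow (t0 - s) (α * H - 1)))
          + (∫⁻ s in Set.Ioi a, ENNReal.ofReal (posPow (t0 + h - s) (α * H - 1)))) := by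
      refine le_trans (lintegral_mono hnear_pt) ?_
      rw [lintegral_const_mul' _ _ ENNReal.ofReal_ne_top,
        lintegral_add_left (f := fun s => ENNReal.ofReal (posPow (t0 + h / 2 - s) (α * H - 1))
          + ENNReal.ofReal (posPow (t0 - s) (α * H - 1))) ((Gmeas _ _).add (Gmeas _ _)),
        lintegral_add_left (Gmeas _ _)]
    have E := fun (t : ℝ) (ht : t ≤ a + 2 * h) => lint_near hp t a (2 * h) (by linarith) ht
    have e1 := E (t0 + h / 2) (by rw [ha_def]; linarith)
    have e2 := E t0 (by rw [ha_def]; linarith)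
    have e3 := E (t0 + h) (by rw [ha_def]; linarith)
    refine le_trans step1 ?_
    have hsum : (∫⁻ s in Set.Ioi a, ENNReal.ofReal (posPow (t0 + h / 2 - s) (α * H - 1)))
          + (∫⁻ s in Set.Ioi a, ENNReal.ofReal (posPow (t0 - s) (α * H - 1)))
          + (∫⁻ s in Set.Ioi a, ENNReal.ofReal (posPow (t0 + h - s) (α * H - 1)))
        ≤ ENNReal.ofReal ((2 * h) ^ (α * H - 1 + 1) / (α * H - 1 + 1))
          + ENNReal.ofReal ((2 * h) ^ (α * H - 1 + 1) / (α * H - 1 + 1))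
          + ENNReal.ofReal ((2 * h) ^ (α * H - 1 + 1) / (α * H - 1 + 1)) :=
      add_le_add (add_le_add e1 e2) e3
    refine le_trans (mul_le_mul_right hsum _) ?_
    have hEnn : 0 ≤ (2 * h) ^ (α * H - 1 + 1) / (α * H - 1 + 1) :=
      div_nonneg (Real.rpow_nonneg (by linarith) _) (by linarith)
    rw [← ENNReal.ofReal_add hEnn hEnn,
      ← ENNReal.ofReal_add (add_nonneg hEnn hEnn) hEnn,
      ← ENNReal.ofReal_mul (Real.rpow_nonneg (by norm_num) _)]
    apply ENNReal.ofReal_le_ofReal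
    have hexp : α * H - 1 + 1 = α * H := by ring
    rw [hexp]
    have h2h : (2 * h) ^ (α * H) = 2 ^ (α * H) * h ^ (α * H) :=
      Real.mul_rpow (by norm_num) hh.le
    rw [h2h]
    apply le_of_eq
    ring
  -- Far part
  have hfar_pt : ∀ s ∈ Set.Ioc (0:ℝ) a, F s ≤
      ENNReal.ofReal (K ^ α * (h ^ α * h ^ α))
        * ENNReal.ofReal (posPow (t0 - s) (α * H - 1 - 2 * α)) := by
    intro s hs
    have hsa : s ≤ t0 - h := by rw [← ha_def]; exact hs.2
    have hu : 0 < t0 - s := by linarith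
    have hu2 : 0 < t0 + h / 2 - s := by linarith
    have hu3 : 0 < t0 + h - s := by linarith
    have harg1 : t0 + h / 2 - s = (t0 - s) + h / 2 := by ring
    have harg2 : t0 + h - s = (t0 - s) + h := by ring
    have hFs : F s = ENNReal.ofReal
        (|2 * ((t0 - s) + h / 2) ^ (H - 1/α) - (t0 - s) ^ (H - 1/α)
          - ((t0 - s) + h) ^ (H - 1/α)| ^ α) := by
      rw [hF_def]
      simp only []
      rw [harg1, harg2, posPow_of_pos (by linarith), posPow_of_pos hu,
        posPow_of_pos (by linarith)]
    have hbd := second_diff_bound (e := H - 1/α) (u := t0 - s) (h := h) he2 hu hh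
    have hr : |2 * ((t0 - s) + h / 2) ^ (H - 1/α) - (t0 - s) ^ (H - 1/α)
          - ((t0 - s) + h) ^ (H - 1/α)| ^ α
        ≤ (K * (h * h) * (t0 - s) ^ (H - 1/α - 2)) ^ α := by
      refine Real.rpow_le_rpow (abs_nonneg _) ?_ hα.le
      calc |2 * ((t0 - s) + h / 2) ^ (H - 1/α) - (t0 - s) ^ (H - 1/α)
            - ((t0 - s) + h) ^ (H - 1/α)|
          ≤ |H - 1/α| * |H - 1/α - 1| * (h * h) * (t0 - s) ^ (H - 1/α - 2) := hbd
        _ = K * (h * h) * (t0 - s) ^ (H - 1/α - 2) := by rw [hK_def]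
    have hsplit : (K * (h * h) * (t0 - s) ^ (H - 1/α - 2)) ^ α
        = K ^ α * (h ^ α * h ^ α) * (t0 - s) ^ (α * H - 1 - 2 * α) := by
      rw [Real.mul_rpow (mul_nonneg hKnn (mul_nonneg hh.le hh.le))
          (Real.rpow_nonneg hu.le _),
        Real.mul_rpow hKnn (mul_nonneg hh.le hh.le),
        Real.mul_rpow hh.le hh.le,
        ← Real.rpow_mul hu.le, heq]
    rw [hFs]
    calc ENNReal.ofReal (|2 * ((t0 - s) + h / 2) ^ (H - 1/α) - (t0 - s) ^ (H - 1/α)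
          - ((t0 - s) + h) ^ (H - 1/α)| ^ α)
        ≤ ENNReal.ofReal (K ^ α * (h ^ α * h ^ α) * (t0 - s) ^ (α * H - 1 - 2 * α)) := by
          refine ENNReal.ofReal_le_ofReal ?_
          rw [← hsplit]; exact hr
      _ = ENNReal.ofReal (K ^ α * (h ^ α * h ^ α))
            * ENNReal.ofReal (posPow (t0 - s) (α * H - 1 - 2 * α)) := by
          rw [posPow_of_pos hu,
            ENNReal.ofReal_mul (mul_nonneg (Real.rpow_nonneg hKnn _)
              (mul_nonneg (Real.rpow_nonneg hh.le _) (Real.rpow_nonneg hh.le _)))]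
  have far : ∫⁻ s in Set.Ioc (0:ℝ) a, F s
      ≤ ENNReal.ofReal (K ^ α / (2 * α - α * H) * h ^ (α * H)) := by
    have step1 : ∫⁻ s in Set.Ioc (0:ℝ) a, F s
        ≤ ENNReal.ofReal (K ^ α * (h ^ α * h ^ α))
          * ∫⁻ s in Set.Ioc (0:ℝ) a, ENNReal.ofReal (posPow (t0 - s) (α * H - 1 - 2 * α)) := by
      refine le_trans (setLIntegral_mono (((Gmeas _ _).const_mul _)) hfar_pt) ?_
      rw [lintegral_const_mul' _ _ ENNReal.ofReal_ne_top]
    refine le_trans step1 ?_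
    have step2 := lint_far hq t0 a h hh (by rw [ha_def]; linarith)
    refine le_trans (mul_le_mul_right step2 _) ?_
    rw [← ENNReal.ofReal_mul (mul_nonneg (Real.rpow_nonneg hKnn _)
      (mul_nonneg (Real.rpow_nonneg hh.le _) (Real.rpow_nonneg hh.le _)))]
    apply ENNReal.ofReal_le_ofReal
    apply le_of_eq
    have hpow : h ^ α * h ^ α * h ^ (α * H - 1 - 2 * α + 1) = h ^ (α * H) := by
      rw [← Real.rpow_add hh, ← Real.rpow_add hh]
      congr 1; ring
    have hden : -(α * H - 1 - 2 * α + 1) = 2 * α - α * H := by ring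
    calc K ^ α * (h ^ α * h ^ α) * (h ^ (α * H - 1 - 2 * α + 1) / -(α * H - 1 - 2 * α + 1))
        = (K ^ α / -(α * H - 1 - 2 * α + 1))
            * (h ^ α * h ^ α * h ^ (α * H - 1 - 2 * α + 1)) := by ring
      _ = K ^ α / (2 * α - α * H) * h ^ (α * H) := by rw [hpow, hden]
  -- Combine
  have hsubset : Set.Ioi (0:ℝ) ⊆ Set.Ioc 0 a ∪ Set.Ioi a := by
    intro s hs
    rcases le_or_gt s a with hcase | hcase
    · exact Or.inl ⟨hs, hcase⟩
    · exact Or.inr hcase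
  calc ∫⁻ s in Set.Ioi (0:ℝ), F s
      ≤ ∫⁻ s in Set.Ioc (0:ℝ) a ∪ Set.Ioi a, F s := lintegral_mono_set hsubset
    _ ≤ (∫⁻ s in Set.Ioc (0:ℝ) a, F s) + ∫⁻ s in Set.Ioi a, F s := lintegral_union_le _ _ _
    _ ≤ ENNReal.ofReal (K ^ α / (2 * α - α * H) * h ^ (α * H))
          + ENNReal.ofReal (3 * 4 ^ α * ((2:ℝ) ^ (α * H) / (α * H)) * h ^ (α * H)) :=
        add_le_add far near
    _ ≤ _ := by
        rw [← ENNReal.ofReal_add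
          (mul_nonneg (div_nonneg (Real.rpow_nonneg hKnn _) hD.le) (Real.rpow_nonneg hh.le _))
          (by positivity)]
        apply ENNReal.ofReal_le_ofReal
        apply le_of_eq
        ring
/-- Key estimate on the scale factors of the Schauder coefficients of the α-stable
Riemann–Liouville process: with `H' = H - 1/α`, `t⁰ = (n-1)2^{-j}`, `t¹ = (n-1/2)2^{-j}`,
`t² = n 2^{-j}`, one has
`∫_0^∞ |2(t¹-s)₊^{H'} - (t⁰-s)₊^{H'} - (t²-s)₊^{H'}|^α ds ≤ C 2^{-αHj}`. -/
theorem schauder_scale_estimate_RL (α H : ℝ)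
    (hα : 0 < α) (hα2 : α ≤ 2) (hH0 : 0 < H) (hH2 : H < 2) :
    ∃ C : ℝ, 0 < C ∧ ∀ j n : ℕ, 1 ≤ n → n ≤ 2 ^ j →
      ∫⁻ s in Set.Ioi (0:ℝ),
        ENNReal.ofReal
          (|2 * posPow (((n : ℝ) - 1/2) * 2 ^ (-(j : ℝ)) - s) (H - 1/α)
              - posPow (((n : ℝ) - 1) * 2 ^ (-(j : ℝ)) - s) (H - 1/α)
              - posPow ((n : ℝ) * 2 ^ (-(j : ℝ)) - s) (H - 1/α)| ^ α)
        ≤ ENNReal.ofReal (C * 2 ^ (-(α * H * j))) := by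
  have hαH : 0 < α * H := mul_pos hα hH0
  have hD : 0 < 2 * α - α * H := by nlinarith
  refine ⟨3 * 4 ^ α * ((2:ℝ) ^ (α * H) / (α * H))
    + (|H - 1/α| * |H - 1/α - 1|) ^ α / (2 * α - α * H), ?_, ?_⟩
  · apply add_pos_of_pos_of_nonneg
    · exact mul_pos (mul_pos (by norm_num) (Real.rpow_pos_of_pos (by norm_num) _))
        (div_pos (Real.rpow_pos_of_pos (by norm_num) _) hαH)
    · exact div_nonneg
        (Real.rpow_nonneg (mul_nonneg (abs_nonneg _) (abs_nonneg _)) _) hD.le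
  · intro j n _ _
    set h := (2:ℝ) ^ (-(j : ℝ)) with hh_def
    have hh : 0 < h := Real.rpow_pos_of_pos (by norm_num) _
    have heqi : ∫⁻ s in Set.Ioi (0:ℝ),
        ENNReal.ofReal
          (|2 * posPow (((n : ℝ) - 1/2) * h - s) (H - 1/α)
              - posPow (((n : ℝ) - 1) * h - s) (H - 1/α)
              - posPow ((n : ℝ) * h - s) (H - 1/α)| ^ α)
        = ∫⁻ s in Set.Ioi (0:ℝ),
        ENNReal.ofReal
          (|2 * posPow ((((n : ℝ) - 1) * h) + h / 2 - s) (H - 1/α)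
              - posPow (((n : ℝ) - 1) * h - s) (H - 1/α)
              - posPow ((((n : ℝ) - 1) * h) + h - s) (H - 1/α)| ^ α) := by
      refine lintegral_congr fun s => ?_
      rw [show ((n : ℝ) - 1/2) * h - s = (((n : ℝ) - 1) * h) + h / 2 - s by ring,
        show (n : ℝ) * h - s = (((n : ℝ) - 1) * h) + h - s by ring]
    rw [heqi]
    refine le_trans (main_aux α H hα hH0 hH2 (((n : ℝ) - 1) * h) h hh) ?_
    apply le_of_eq
    congr 1
    have hpow : h ^ (α * H) = (2:ℝ) ^ (-(α * H * j)) := by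
      rw [hh_def, ← Real.rpow_mul (by norm_num : (0:ℝ) ≤ 2)]
      congr 1
      ring
    rw [hpow]
end

section
/- Let 0 < H' < 1 and 1 < α ≤ 2. Then there exists a constant C > 0 (depending only on H' and α) such that: (i) for every integer n ≥ 2, ∫_0^∞ | 2·(u + n − 1/2)^{H'} − (u + n − 1)^{H'} − (u + n)^{H'} |^α du ≤ C·(n−1)^{α(H'−2)+1}; and (ii) for every integer n ≥ 1, ∫_0^∞ | 2·(u + n − 1/2)^{H'} − (u + n − 1)^{H'} − (u + n)^{H'} |^α du ≤ C. -/
open MeasureTheory Filter Set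
open scoped ENNReal

lemma key_bd (H' : ℝ) (h0 : 0 < H') (h1 : H' < 1) {x : ℝ} (hx : 0 < x) :
    |2 * (x + 1/2) ^ H' - x ^ H' - (x + 1) ^ H'| ≤ x ^ (H' - 2) := by
  set g : ℝ → ℝ := fun t => (t + 1/2) ^ H' - t ^ H' with hg
  have hderiv : ∀ t : ℝ, 0 < t →
      HasDerivAt g (H' * (t + 1/2) ^ (H' - 1) - H' * t ^ (H' - 1)) t := by
    intro t ht
    have h2 : (0:ℝ) < t + 1/2 := by linarith
    have hA : HasDerivAt (fun s : ℝ => (s + 1/2) ^ H') (H' * (t + 1/2) ^ (H' - 1)) t := by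
      have := (Real.hasDerivAt_rpow_const (x := t + 1/2) (p := H') (Or.inl h2.ne')).comp t
        ((hasDerivAt_id t).add_const (1/2))
      simpa [Function.comp_def] using this
    exact hA.sub (Real.hasDerivAt_rpow_const (Or.inl ht.ne'))
  obtain ⟨ξ, hξ, hξ_eq⟩ := exists_hasDerivAt_eq_slope g
    (fun t => H' * (t + 1/2) ^ (H' - 1) - H' * t ^ (H' - 1))
    (by linarith : x < x + 1/2)
    (fun t ht => ((hderiv t (lt_of_lt_of_le hx ht.1)).continuousAt).continuousWithinAt)
    (fun t ht => hderiv t (lt_trans hx ht.1))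
  have hξ0 : 0 < ξ := lt_trans hx hξ.1
  obtain ⟨η, hη, hη_eq⟩ := exists_hasDerivAt_eq_slope (fun t : ℝ => t ^ (H' - 1))
    (fun t => (H' - 1) * t ^ (H' - 1 - 1))
    (by linarith : ξ < ξ + 1/2)
    (fun t ht => (Real.continuousAt_rpow_const _ _
        (Or.inl (ne_of_gt (lt_of_lt_of_le hξ0 ht.1)))).continuousWithinAt)
    (fun t ht => Real.hasDerivAt_rpow_const (Or.inl (ne_of_gt (lt_trans hξ0 ht.1))))
  have hη0 : x < η := lt_trans hξ.1 hη.1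
  set P := η ^ (H' - 1 - 1) with hP
  have e1 : (H' - 1) * P = 2 * ((ξ + 1/2) ^ (H' - 1) - ξ ^ (H' - 1)) := by
    rw [hη_eq, show ξ + 1/2 - ξ = (1/2:ℝ) by ring]
    ring
  have hc : (ξ + 1/2) ^ (H' - 1) - ξ ^ (H' - 1) = (1/2) * ((H' - 1) * P) := by
    linarith
  have e2 : 2 * (x + 1/2) ^ H' - x ^ H' - (x + 1) ^ H' =
      -(1/2) * (H' * (ξ + 1/2) ^ (H' - 1) - H' * ξ ^ (H' - 1)) := by
    have hx1 : x + 1/2 + 1/2 = x + 1 := by ring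
    rw [hξ_eq]
    simp only [hg, hx1]
    ring
  have e3 : -(1/2) * (H' * (ξ + 1/2) ^ (H' - 1) - H' * ξ ^ (H' - 1))
      = (1/4) * (H' * (1 - H')) * P := by
    linear_combination (-(1/2) * H') * hc
  rw [e2, e3]
  have hηpos : (0:ℝ) ≤ P := Real.rpow_nonneg (by linarith : (0:ℝ) ≤ η) _
  have hnn : (0:ℝ) ≤ (1/4) * (H' * (1 - H')) * P :=
    mul_nonneg (by nlinarith) hηpos
  rw [abs_of_nonneg hnn]
  have hηpow : P ≤ x ^ (H' - 1 - 1) :=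
    Real.rpow_le_rpow_of_nonpos hx hη0.le (by linarith)
  have hx2 : x ^ (H' - 1 - 1) = x ^ (H' - 2) := by rw [show H' - 1 - 1 = H' - 2 from by ring]
  calc (1/4) * (H' * (1 - H')) * P
      ≤ 1 * (x ^ (H' - 1 - 1)) := mul_le_mul (by nlinarith) hηpow hηpos (by norm_num)
    _ = x ^ (H' - 2) := by rw [one_mul, hx2]

lemma lint_shift (f : ℝ → ℝ≥0∞) (c : ℝ) :
    ∫⁻ u in Ioi (0:ℝ), f (u + c) = ∫⁻ x in Ioi c, f x := by
  have h := (measurePreserving_add_right volume c).setLIntegral_comp_preimage_emb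
    (measurableEmbedding_addRight c) f (Ioi c)
  rw [preimage_add_const_Ioi, sub_self] at h
  exact h

lemma lint_rpow {β : ℝ} (hβ : β < -1) {c : ℝ} (hc : 0 < c) :
    ∫⁻ x in Ioi c, ENNReal.ofReal (x ^ β) = ENNReal.ofReal (-c ^ (β+1) / (β+1)) := by
  rw [← integral_Ioi_rpow_of_lt hβ hc,
    ← ofReal_integral_eq_lintegral_ofReal (integrableOn_Ioi_rpow_of_lt hβ hc) ?_]
  filter_upwards [self_mem_ae_restrict (measurableSet_Ioi : MeasurableSet (Ioi c))] with x hx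
  exact Real.rpow_nonneg (le_of_lt (lt_trans hc hx)) _

/-- Estimates on the scale factors of the Schauder coefficients of the long-memory
process: for `0 < H' < 1` and `1 < α ≤ 2` there is `C > 0` with
(i) `∫_0^∞ |2(u+n-1/2)^{H'} - (u+n-1)^{H'} - (u+n)^{H'}|^α du ≤ C (n-1)^{α(H'-2)+1}`
for `n ≥ 2`, and (ii) the same integral is `≤ C` for every `n ≥ 1`. -/
theorem schauder_scale_estimate_LM (H' α : ℝ)
    (h0 : 0 < H') (h1 : H' < 1) (hα1 : 1 < α) (hα2 : α ≤ 2) :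
    ∃ C : ℝ, 0 < C ∧
      (∀ n : ℕ, 2 ≤ n →
        ∫⁻ u in Set.Ioi (0:ℝ),
          ENNReal.ofReal
            (|2 * (u + n - 1/2) ^ H' - (u + n - 1) ^ H' - (u + n) ^ H'| ^ α)
          ≤ ENNReal.ofReal (C * ((n : ℝ) - 1) ^ (α * (H' - 2) + 1))) ∧
      (∀ n : ℕ, 1 ≤ n →
        ∫⁻ u in Set.Ioi (0:ℝ),
          ENNReal.ofReal
            (|2 * (u + n - 1/2) ^ H' - (u + n - 1) ^ H' - (u + n) ^ H'| ^ α)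
          ≤ ENNReal.ofReal C) := by
  set β : ℝ := α * (H' - 2) with hβdef
  have hβ : β < -1 := by nlinarith
  set K : ℝ := -1 / (β + 1) with hKdef
  have hK : 0 < K := by
    rw [hKdef]
    exact div_pos_of_neg_of_neg (by norm_num) (by linarith)
  set C : ℝ := 64 + K with hCdef
  have hC : 0 < C := by positivity
  -- pointwise bound for the integrand
  have hpoint : ∀ x : ℝ, 0 < x →
      |2 * (x + 1/2) ^ H' - x ^ H' - (x + 1) ^ H'| ^ α ≤ x ^ β := by
    intro x hx
    calc |2 * (x + 1/2) ^ H' - x ^ H' - (x + 1) ^ H'| ^ α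
        ≤ (x ^ (H' - 2)) ^ α :=
          Real.rpow_le_rpow (abs_nonneg _) (key_bd H' h0 h1 hx) (by linarith)
      _ = x ^ β := by rw [← Real.rpow_mul hx.le, hβdef, mul_comm]
  -- the main tail estimate
  have main : ∀ n : ℕ, 2 ≤ n →
      ∫⁻ u in Set.Ioi (0:ℝ),
        ENNReal.ofReal
          (|2 * (u + n - 1/2) ^ H' - (u + n - 1) ^ H' - (u + n) ^ H'| ^ α)
        ≤ ENNReal.ofReal (C * ((n : ℝ) - 1) ^ (β + 1)) := by
    intro n hn
    have hn1 : (1:ℝ) ≤ (n:ℝ) - 1 := by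
      have : (2:ℝ) ≤ (n:ℝ) := by exact_mod_cast hn
      linarith
    set c : ℝ := (n:ℝ) - 1 with hc
    have hcpos : 0 < c := by linarith
    have step1 : ∫⁻ u in Set.Ioi (0:ℝ),
        ENNReal.ofReal
          (|2 * (u + n - 1/2) ^ H' - (u + n - 1) ^ H' - (u + n) ^ H'| ^ α)
        ≤ ∫⁻ u in Set.Ioi (0:ℝ), ENNReal.ofReal ((u + c) ^ β) := by
      apply setLIntegral_mono' measurableSet_Ioi
      intro u hu
      apply ENNReal.ofReal_le_ofReal
      have hx : 0 < u + c := by have := mem_Ioi.mp hu; linarith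
      have e1 : u + (n:ℝ) - 1/2 = (u + c) + 1/2 := by rw [hc]; ring
      have e2 : u + (n:ℝ) - 1 = u + c := by rw [hc]; ring
      have e3 : u + (n:ℝ) = (u + c) + 1 := by rw [hc]; ring
      rw [e1, e2, e3]
      exact hpoint _ hx
    have step2 : ∫⁻ u in Set.Ioi (0:ℝ), ENNReal.ofReal ((u + c) ^ β)
        = ENNReal.ofReal (-c ^ (β+1) / (β+1)) := by
      rw [lint_shift (fun x => ENNReal.ofReal (x ^ β)) c]
      exact lint_rpow hβ hcpos
    refine (step1.trans_eq step2).trans (ENNReal.ofReal_le_ofReal ?_)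
    have : -c ^ (β+1) / (β+1) = K * c ^ (β+1) := by rw [hKdef]; ring
    rw [this]
    exact mul_le_mul_of_nonneg_right (by rw [hCdef]; linarith)
      (Real.rpow_nonneg hcpos.le _)
  refine ⟨C, hC, main, ?_⟩
  intro n hn
  rcases Nat.lt_or_ge n 2 with h2 | h2
  · -- n = 1
    have hn1 : n = 1 := by omega
    subst hn1
    have hsplit : ∫⁻ u in Set.Ioi (0:ℝ),
        ENNReal.ofReal
          (|2 * (u + (1:ℕ) - 1/2) ^ H' - (u + (1:ℕ) - 1) ^ H' - (u + (1:ℕ)) ^ H'| ^ α)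
        = (∫⁻ u in Set.Ioc (0:ℝ) 1,
            ENNReal.ofReal
              (|2 * (u + (1:ℕ) - 1/2) ^ H' - (u + (1:ℕ) - 1) ^ H' - (u + (1:ℕ)) ^ H'| ^ α))
          + ∫⁻ u in Set.Ioi (1:ℝ),
            ENNReal.ofReal
              (|2 * (u + (1:ℕ) - 1/2) ^ H' - (u + (1:ℕ) - 1) ^ H' - (u + (1:ℕ)) ^ H'| ^ α) := by
      rw [← lintegral_union measurableSet_Ioi (Set.Ioc_disjoint_Ioi le_rfl),
        Set.Ioc_union_Ioi_eq_Ioi zero_le_one]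
    rw [hsplit]
    have hb2 : ∀ b : ℝ, 0 ≤ b → b ≤ 2 → b ^ H' ≤ 2 := by
      intro b hb0 hb2
      calc b ^ H' ≤ 2 ^ H' := Real.rpow_le_rpow hb0 hb2 h0.le
        _ ≤ 2 ^ (1:ℝ) := Real.rpow_le_rpow_of_exponent_le one_le_two h1.le
        _ = 2 := Real.rpow_one 2
    have part1 : ∫⁻ u in Set.Ioc (0:ℝ) 1,
        ENNReal.ofReal
          (|2 * (u + (1:ℕ) - 1/2) ^ H' - (u + (1:ℕ) - 1) ^ H' - (u + (1:ℕ)) ^ H'| ^ α)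
        ≤ ENNReal.ofReal 64 := by
      have : ∫⁻ u in Set.Ioc (0:ℝ) 1,
          ENNReal.ofReal
            (|2 * (u + (1:ℕ) - 1/2) ^ H' - (u + (1:ℕ) - 1) ^ H' - (u + (1:ℕ)) ^ H'| ^ α)
          ≤ ∫⁻ _ in Set.Ioc (0:ℝ) 1, ENNReal.ofReal 64 := by
        apply setLIntegral_mono' measurableSet_Ioc
        intro u hu
        apply ENNReal.ofReal_le_ofReal
        obtain ⟨hu0, hu1⟩ := hu
        have e1 : u + ((1:ℕ):ℝ) - 1/2 = u + 1/2 := by push_cast; ring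
        have e2 : u + ((1:ℕ):ℝ) - 1 = u := by push_cast; ring
        have e3 : u + ((1:ℕ):ℝ) = u + 1 := by push_cast; ring
        rw [e1, e2, e3]
        have hA : (u + 1/2) ^ H' ≤ 2 := hb2 _ (by linarith) (by linarith)
        have hB : u ^ H' ≤ 2 := hb2 _ hu0.le (by linarith)
        have hCC : (u + 1) ^ H' ≤ 2 := hb2 _ (by linarith) (by linarith)
        have hA0 : 0 ≤ (u + 1/2) ^ H' := Real.rpow_nonneg (by linarith) _
        have hB0 : 0 ≤ u ^ H' := Real.rpow_nonneg hu0.le _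
        have hC0 : 0 ≤ (u + 1) ^ H' := Real.rpow_nonneg (by linarith) _
        have habs : |2 * (u + 1/2) ^ H' - u ^ H' - (u + 1) ^ H'| ≤ 8 := by
          rw [abs_le]; constructor <;> linarith
        calc |2 * (u + 1/2) ^ H' - u ^ H' - (u + 1) ^ H'| ^ α
            ≤ (8:ℝ) ^ α := Real.rpow_le_rpow (abs_nonneg _) habs (by linarith)
          _ ≤ (8:ℝ) ^ (2:ℝ) :=
              Real.rpow_le_rpow_of_exponent_le (by norm_num) hα2
          _ = 64 := by
              rw [show (2:ℝ) = ((2:ℕ):ℝ) by norm_num, Real.rpow_natCast]; norm_num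
      refine this.trans ?_
      rw [setLIntegral_const, Real.volume_Ioc]
      simp
    have part2 : ∫⁻ u in Set.Ioi (1:ℝ),
        ENNReal.ofReal
          (|2 * (u + (1:ℕ) - 1/2) ^ H' - (u + (1:ℕ) - 1) ^ H' - (u + (1:ℕ)) ^ H'| ^ α)
        ≤ ENNReal.ofReal K := by
      have hmono : ∫⁻ u in Set.Ioi (1:ℝ),
          ENNReal.ofReal
            (|2 * (u + (1:ℕ) - 1/2) ^ H' - (u + (1:ℕ) - 1) ^ H' - (u + (1:ℕ)) ^ H'| ^ α)
          ≤ ∫⁻ u in Set.Ioi (1:ℝ), ENNReal.ofReal (u ^ β) := by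
        apply setLIntegral_mono' measurableSet_Ioi
        intro u hu
        apply ENNReal.ofReal_le_ofReal
        have hu1 : (1:ℝ) < u := mem_Ioi.mp hu
        have e1 : u + ((1:ℕ):ℝ) - 1/2 = u + 1/2 := by push_cast; ring
        have e2 : u + ((1:ℕ):ℝ) - 1 = u := by push_cast; ring
        have e3 : u + ((1:ℕ):ℝ) = u + 1 := by push_cast; ring
        rw [e1, e2, e3]
        exact hpoint u (by linarith)
      refine hmono.trans ?_
      rw [lint_rpow hβ one_pos]
      apply ENNReal.ofReal_le_ofReal
      rw [Real.one_rpow, hKdef]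
    calc _ ≤ ENNReal.ofReal 64 + ENNReal.ofReal K := add_le_add part1 part2
      _ = ENNReal.ofReal C := by
          rw [← ENNReal.ofReal_add (by norm_num) hK.le]
  · -- n ≥ 2
    refine (main n h2).trans (ENNReal.ofReal_le_ofReal ?_)
    have hn1 : (1:ℝ) ≤ (n:ℝ) - 1 := by
      have : (2:ℝ) ≤ (n:ℝ) := by exact_mod_cast h2
      linarith
    have : ((n:ℝ) - 1) ^ (β + 1) ≤ 1 :=
      Real.rpow_le_one_of_one_le_of_nonpos hn1 (by linarith)
    calc C * ((n:ℝ) - 1) ^ (β + 1) ≤ C * 1 :=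
        mul_le_mul_of_nonneg_left this hC.le
      _ = C := mul_one C
end

section
/- Let p ≥ 1, let a₀ < a₁ < … < a_n be reals, and let f: [a₀, a_n] → ℝ satisfy f(a₀) = f(a₁) = … = f(a_n) = 0. For a function f on an interval I, let V_p(f; I) = sup{ (Σ_{i=1}^m |f(t_i) − f(t_{i−1})|^p)^{1/p} : m ≥ 1, t_0 < t_1 < … < t_m, all t_i ∈ I } denote its strong p-variation. Then V_p(f; [a₀, a_n]) ≤ 2^{1−1/p} · (Σ_{i=1}^n V_p(f; [a_{i−1}, a_i])^p)^{1/p}. -/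
open MeasureTheory Filter Set
open scoped ENNReal NNReal Topology

/-- The strong `p`-variation of `f` on the set `I`: the supremum, over all finite
increasing sequences `t 0 < t 1 < ⋯ < t n` of points of `I`, of
`(Σ_{i<n} |f (t (i+1)) - f (t i)|^p)^{1/p}` (with values in `ℝ≥0∞`). -/
noncomputable def pVar (p : ℝ) (f : ℝ → ℝ) (I : Set ℝ) : ℝ≥0∞ :=
  ⨆ (n : ℕ) (t : ℕ → ℝ) (_ : ∀ i ≤ n, t i ∈ I) (_ : ∀ i < n, t i < t (i + 1)),
    (∑ i ∈ Finset.range n, (ENNReal.ofReal |f (t (i + 1)) - f (t i)|) ^ p) ^ (1 / p)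

namespace PVarSub

variable {p : ℝ}

lemma mono_of_lt_succ {t : ℕ → ℝ} {m : ℕ} (h : ∀ i < m, t i < t (i + 1))
    {i j : ℕ} (hij : i ≤ j) (hjm : j ≤ m) : t i ≤ t j := by
  induction j, hij using Nat.le_induction with
  | base => exact le_rfl
  | succ k hk ih => exact (ih (by omega)).trans (h k (by omega)).le

lemma sum_le_pVar_pow (hp : 1 ≤ p) (f : ℝ → ℝ) (I : Set ℝ)
    (m : ℕ) (t : ℕ → ℝ) (ht : ∀ i ≤ m, t i ∈ I) (hmono : ∀ i < m, t i < t (i + 1)) :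
    ∑ i ∈ Finset.range m, (ENNReal.ofReal |f (t (i + 1)) - f (t i)|) ^ p
      ≤ pVar p f I ^ p := by
  have hp0 : (0 : ℝ) < p := lt_of_lt_of_le one_pos hp
  set S := ∑ i ∈ Finset.range m, (ENNReal.ofReal |f (t (i + 1)) - f (t i)|) ^ p with hS
  have h1 : S ^ (1 / p) ≤ pVar p f I := by
    apply le_iSup_of_le m
    apply le_iSup_of_le t
    apply le_iSup_of_le ht
    exact le_iSup_of_le hmono le_rfl
  calc S = (S ^ (1 / p)) ^ p := by
        rw [← ENNReal.rpow_mul, one_div_mul_cancel hp0.ne', ENNReal.rpow_one]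
    _ ≤ pVar p f I ^ p := ENNReal.rpow_le_rpow h1 hp0.le

/-- Appending the right endpoint: if `f c = 0` we can add `|f (t m)|^p` for free. -/
lemma append_bound (hp : 1 ≤ p) (f : ℝ → ℝ) {b c : ℝ} (hfc : f c = 0)
    (m : ℕ) (t : ℕ → ℝ) (ht : ∀ i ≤ m, t i ∈ Icc b c) (hmono : ∀ i < m, t i < t (i + 1)) :
    (∑ i ∈ Finset.range m, (ENNReal.ofReal |f (t (i + 1)) - f (t i)|) ^ p)
      + (ENNReal.ofReal |f (t m)|) ^ p ≤ pVar p f (Icc b c) ^ p := by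
  have hp0 : (0 : ℝ) < p := lt_of_lt_of_le one_pos hp
  rcases eq_or_lt_of_le (ht m le_rfl).2 with h | h
  · have : f (t m) = 0 := by rw [h, hfc]
    rw [this]
    simp only [abs_zero, ENNReal.ofReal_zero, ENNReal.zero_rpow_of_pos hp0, add_zero]
    exact sum_le_pVar_pow hp f _ m t ht hmono
  · set s : ℕ → ℝ := fun i => if i ≤ m then t i else c with hs
    have hsmem : ∀ i ≤ m + 1, s i ∈ Icc b c := by
      intro i hi
      by_cases h' : i ≤ m
      · simpa [hs, h'] using ht i h'
      · have : s i = c := by simp [hs, h']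
        rw [this]
        exact ⟨(ht 0 (Nat.zero_le m)).1.trans (ht 0 (Nat.zero_le m)).2, le_rfl⟩
    have hsmono : ∀ i < m + 1, s i < s (i + 1) := by
      intro i hi
      rcases Nat.lt_or_ge i m with h' | h'
      · have h1 : s i = t i := by simp only [hs]; rw [if_pos (by omega)]
        have h2 : s (i + 1) = t (i + 1) := by simp only [hs]; rw [if_pos (by omega)]
        rw [h1, h2]; exact hmono i h'
      · have him : i = m := by omega
        subst him
        have h1 : s i = t i := by simp only [hs]; rw [if_pos (by omega)]
        have h2 : s (i + 1) = c := by simp only [hs]; rw [if_neg (by omega)]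
        rw [h1, h2]; exact h
    have key := sum_le_pVar_pow hp f (Icc b c) (m + 1) s hsmem hsmono
    have hsum : ∑ i ∈ Finset.range (m + 1), (ENNReal.ofReal |f (s (i + 1)) - f (s i)|) ^ p
        = (∑ i ∈ Finset.range m, (ENNReal.ofReal |f (t (i + 1)) - f (t i)|) ^ p)
          + (ENNReal.ofReal |f (t m)|) ^ p := by
      rw [Finset.sum_range_succ]
      congr 1
      · apply Finset.sum_congr rfl
        intro i hi
        have hi' : i < m := Finset.mem_range.mp hi
        have h1 : s i = t i := by simp only [hs]; rw [if_pos (by omega)]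
        have h2 : s (i + 1) = t (i + 1) := by simp only [hs]; rw [if_pos (by omega)]
        rw [h1, h2]
      · have h1 : s m = t m := by simp only [hs]; rw [if_pos le_rfl]
        have h2 : s (m + 1) = c := by simp only [hs]; rw [if_neg (by omega)]
        rw [h1, h2, hfc, zero_sub, abs_neg]
    rw [hsum] at key
    exact key

/-- Single-interval bound: both boundary terms can be added for free. -/
lemma interval_bound (hp : 1 ≤ p) (f : ℝ → ℝ) {b c : ℝ} (hfb : f b = 0) (hfc : f c = 0)
    (m : ℕ) (t : ℕ → ℝ) (ht : ∀ i ≤ m, t i ∈ Icc b c) (hmono : ∀ i < m, t i < t (i + 1)) :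
    (ENNReal.ofReal |f (t 0)|) ^ p
      + (∑ i ∈ Finset.range m, (ENNReal.ofReal |f (t (i + 1)) - f (t i)|) ^ p)
      + (ENNReal.ofReal |f (t m)|) ^ p ≤ pVar p f (Icc b c) ^ p := by
  have hp0 : (0 : ℝ) < p := lt_of_lt_of_le one_pos hp
  rcases eq_or_lt_of_le (ht 0 (Nat.zero_le m)).1 with h | h
  · have : f (t 0) = 0 := by rw [← h, hfb]
    rw [this]
    simp only [abs_zero, ENNReal.ofReal_zero, ENNReal.zero_rpow_of_pos hp0, zero_add]
    exact append_bound hp f hfc m t ht hmono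
  · set s : ℕ → ℝ := fun i => if i = 0 then b else t (i - 1) with hs
    have hsmem : ∀ i ≤ m + 1, s i ∈ Icc b c := by
      intro i hi
      rcases Nat.eq_zero_or_pos i with rfl | hpos
      · have : s 0 = b := by simp [hs]
        rw [this]
        exact ⟨le_rfl, (ht 0 (Nat.zero_le m)).1.trans (ht 0 (Nat.zero_le m)).2⟩
      · have : s i = t (i - 1) := by simp [hs, Nat.pos_iff_ne_zero.mp hpos]
        rw [this]
        exact ht (i - 1) (by omega)
    have hsmono : ∀ i < m + 1, s i < s (i + 1) := by
      intro i hi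
      rcases Nat.eq_zero_or_pos i with rfl | hpos
      · have h1 : s 0 = b := by simp [hs]
        have h2 : s 1 = t 0 := by simp [hs]
        rw [h1, h2]; exact h
      · have h1 : s i = t (i - 1) := by simp [hs, Nat.pos_iff_ne_zero.mp hpos]
        have h2 : s (i + 1) = t i := by simp [hs]
        rw [h1, h2]
        have := hmono (i - 1) (by omega)
        have hieq : i - 1 + 1 = i := by omega
        rwa [hieq] at this
    have key := append_bound hp f hfc (m + 1) s hsmem hsmono
    have hlast : s (m + 1) = t m := by simp [hs]
    have hsum : ∑ i ∈ Finset.range (m + 1), (ENNReal.ofReal |f (s (i + 1)) - f (s i)|) ^ p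
        = (ENNReal.ofReal |f (t 0)|) ^ p
          + ∑ i ∈ Finset.range m, (ENNReal.ofReal |f (t (i + 1)) - f (t i)|) ^ p := by
      have hg0 : (ENNReal.ofReal |f (s 1) - f (s 0)|) ^ p = (ENNReal.ofReal |f (t 0)|) ^ p := by
        have h1 : s 0 = b := by simp [hs]
        have h2 : s 1 = t 0 := by simp [hs]
        rw [h1, h2, hfb, sub_zero]
      have hgs : ∑ i ∈ Finset.range m, (ENNReal.ofReal |f (s (i + 1 + 1)) - f (s (i + 1))|) ^ p
          = ∑ i ∈ Finset.range m, (ENNReal.ofReal |f (t (i + 1)) - f (t i)|) ^ p := by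
        apply Finset.sum_congr rfl
        intro i _
        have h1 : s (i + 1) = t i := by simp [hs]
        have h2 : s (i + 1 + 1) = t (i + 1) := by simp [hs]
        rw [h1, h2]
      rw [Finset.sum_range_succ', hg0, hgs, add_comm]
    rw [hsum, hlast, add_assoc] at key
    rw [add_assoc]
    exact key

lemma one_le_const (hp : 1 ≤ p) : (1 : ℝ≥0∞) ≤ (2 : ℝ≥0∞) ^ (p - 1) := by
  have := ENNReal.rpow_le_rpow_of_exponent_le (x := 2) one_le_two
    (by linarith : (0 : ℝ) ≤ p - 1)
  simpa using this

/-- Main inductive bound. -/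
lemma main_ind (hp : 1 ≤ p) (f : ℝ → ℝ) :
    ∀ n : ℕ, 0 < n → ∀ a : ℕ → ℝ, (∀ i < n, a i < a (i + 1)) → (∀ i ≤ n, f (a i) = 0) →
      ∀ m : ℕ, ∀ t : ℕ → ℝ, (∀ i ≤ m, t i ∈ Icc (a 0) (a n)) →
        (∀ i < m, t i < t (i + 1)) →
        (2 : ℝ≥0∞) ^ (p - 1) *
            ((ENNReal.ofReal |f (t 0)|) ^ p + (ENNReal.ofReal |f (t m)|) ^ p)
          + ∑ i ∈ Finset.range m, (ENNReal.ofReal |f (t (i + 1)) - f (t i)|) ^ p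
        ≤ (2 : ℝ≥0∞) ^ (p - 1) *
            ∑ j ∈ Finset.range n, pVar p f (Icc (a j) (a (j + 1))) ^ p := by
  have hp0 : (0 : ℝ) < p := lt_of_lt_of_le one_pos hp
  have hC : (1 : ℝ≥0∞) ≤ (2 : ℝ≥0∞) ^ (p - 1) := one_le_const hp
  intro n
  induction n with
  | zero => omega
  | succ n ih =>
    intro _ a ha hfa m t ht hmono
    -- notation
    set C : ℝ≥0∞ := (2 : ℝ≥0∞) ^ (p - 1) with hCdef
    rcases Nat.eq_zero_or_pos n with rfl | hn
    · -- base case: one interval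
      have key := interval_bound hp f (hfa 0 (by omega)) (hfa 1 (by omega)) m t ht hmono
      have h1 : C * ((ENNReal.ofReal |f (t 0)|) ^ p + (ENNReal.ofReal |f (t m)|) ^ p)
            + ∑ i ∈ Finset.range m, (ENNReal.ofReal |f (t (i + 1)) - f (t i)|) ^ p
          ≤ C * ((ENNReal.ofReal |f (t 0)|) ^ p
              + (∑ i ∈ Finset.range m, (ENNReal.ofReal |f (t (i + 1)) - f (t i)|) ^ p)
              + (ENNReal.ofReal |f (t m)|) ^ p) := by
        rw [mul_add, mul_add]
        calc C * (ENNReal.ofReal |f (t 0)|) ^ p + C * (ENNReal.ofReal |f (t m)|) ^ p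
              + ∑ i ∈ Finset.range m, (ENNReal.ofReal |f (t (i + 1)) - f (t i)|) ^ p
            ≤ C * (ENNReal.ofReal |f (t 0)|) ^ p + C * (ENNReal.ofReal |f (t m)|) ^ p
              + C * ∑ i ∈ Finset.range m, (ENNReal.ofReal |f (t (i + 1)) - f (t i)|) ^ p := by
              gcongr
              exact le_mul_of_one_le_left zero_le hC
          _ = _ := by ring
      refine h1.trans ?_
      calc C * ((ENNReal.ofReal |f (t 0)|) ^ p
              + (∑ i ∈ Finset.range m, (ENNReal.ofReal |f (t (i + 1)) - f (t i)|) ^ p)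
              + (ENNReal.ofReal |f (t m)|) ^ p)
          ≤ C * pVar p f (Icc (a 0) (a 1)) ^ p := by gcongr
        _ = C * ∑ j ∈ Finset.range 1, pVar p f (Icc (a j) (a (j + 1))) ^ p := by
            rw [Finset.sum_range_one]
      -- done base
    · -- inductive step, n ≥ 1
      by_cases hall : ∀ i ≤ m, t i ≤ a n
      · -- everything lies in [a 0, a n]
        have ht' : ∀ i ≤ m, t i ∈ Icc (a 0) (a n) :=
          fun i hi => ⟨(ht i hi).1, hall i hi⟩
        have key := ih hn a (fun i hi => ha i (by omega)) (fun i hi => hfa i (by omega))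
          m t ht' hmono
        refine key.trans ?_
        exact mul_le_mul_right
          (Finset.sum_le_sum_of_subset (Finset.range_subset_range.mpr (Nat.le_succ n))) _
      · push_neg at hall
        obtain ⟨i₀, hi₀m, hi₀⟩ := hall
        have hex : ∃ i, i ≤ m ∧ a n < t i := ⟨i₀, hi₀m, hi₀⟩
        obtain ⟨k, hkm, hak, hmin⟩ :
            ∃ k, k ≤ m ∧ a n < t k ∧ ∀ j < k, t j ≤ a n := by
          refine ⟨Nat.find hex, (Nat.find_spec hex).1, (Nat.find_spec hex).2, ?_⟩
          intro j hj
          have hj' := Nat.find_min hex hj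
          push_neg at hj'
          exact hj' (le_trans (le_of_lt hj) (Nat.find_spec hex).1)
        rcases Nat.eq_zero_or_pos k with hk0 | hkpos
        · -- all points in the last interval [a n, a (n+1)]
          have htlast : ∀ i ≤ m, t i ∈ Icc (a n) (a (n + 1)) := by
            intro i hi
            refine ⟨?_, (ht i hi).2⟩
            have : t k ≤ t i := mono_of_lt_succ hmono (by omega) hi
            linarith
          have key := interval_bound hp f (hfa n (by omega)) (hfa (n + 1) le_rfl)
            m t htlast hmono
          have h1 : C * ((ENNReal.ofReal |f (t 0)|) ^ p + (ENNReal.ofReal |f (t m)|) ^ p)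
                + ∑ i ∈ Finset.range m, (ENNReal.ofReal |f (t (i + 1)) - f (t i)|) ^ p
              ≤ C * pVar p f (Icc (a n) (a (n + 1))) ^ p := by
            calc C * ((ENNReal.ofReal |f (t 0)|) ^ p + (ENNReal.ofReal |f (t m)|) ^ p)
                  + ∑ i ∈ Finset.range m, (ENNReal.ofReal |f (t (i + 1)) - f (t i)|) ^ p
                ≤ C * ((ENNReal.ofReal |f (t 0)|) ^ p
                    + (∑ i ∈ Finset.range m,
                        (ENNReal.ofReal |f (t (i + 1)) - f (t i)|) ^ p)
                    + (ENNReal.ofReal |f (t m)|) ^ p) := by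
                  rw [mul_add, mul_add]
                  calc _ ≤ C * (ENNReal.ofReal |f (t 0)|) ^ p
                        + C * (ENNReal.ofReal |f (t m)|) ^ p
                        + C * ∑ i ∈ Finset.range m,
                            (ENNReal.ofReal |f (t (i + 1)) - f (t i)|) ^ p := by
                        gcongr
                        exact le_mul_of_one_le_left zero_le hC
                    _ = _ := by ring
              _ ≤ C * pVar p f (Icc (a n) (a (n + 1))) ^ p := by gcongr
          refine h1.trans ?_
          gcongr
          have : pVar p f (Icc (a n) (a (n + 1))) ^ p
              = (fun j => pVar p f (Icc (a j) (a (j + 1))) ^ p) n := rfl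
          exact Finset.single_le_sum (f := fun j => pVar p f (Icc (a j) (a (j + 1))) ^ p)
            (fun j _ => zero_le) (Finset.self_mem_range_succ n)
        · -- k = k' + 1 with t k' ≤ a n < t k
          obtain ⟨k', rfl⟩ : ∃ k', k = k' + 1 := ⟨k - 1, by omega⟩
          have hk'm : k' < m := by omega
          have htk' : t k' ≤ a n := hmin k' (by omega)
          -- left part: sequence t 0 .. t k' in [a 0, a n]
          have htleft : ∀ i ≤ k', t i ∈ Icc (a 0) (a n) := by
            intro i hi
            refine ⟨(ht i (by omega)).1, ?_⟩
            exact (mono_of_lt_succ hmono hi (by omega)).trans htk'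
          have keyL := ih hn a (fun i hi => ha i (by omega)) (fun i hi => hfa i (by omega))
            k' t htleft (fun i hi => hmono i (by omega))
          -- right part: sequence s i = t (i + (k'+1)) in [a n, a (n+1)]
          set r := m - (k' + 1) with hrdef
          set s : ℕ → ℝ := fun i => t (i + (k' + 1)) with hsdef
          have hsmem : ∀ i ≤ r, s i ∈ Icc (a n) (a (n + 1)) := by
            intro i hi
            refine ⟨?_, (ht (i + (k' + 1)) (by omega)).2⟩
            have : t (k' + 1) ≤ t (i + (k' + 1)) := mono_of_lt_succ hmono (by omega) (by omega)
            have := hak.le.trans this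
            exact this
          have hsmono : ∀ i < r, s i < s (i + 1) := by
            intro i hi
            have := hmono (i + (k' + 1)) (by omega)
            simpa [hsdef, add_right_comm] using this
          have keyR := interval_bound hp f (hfa n (by omega)) (hfa (n + 1) le_rfl)
            r s hsmem hsmono
          have hs0 : s 0 = t (k' + 1) := by simp [hsdef]
          have hsr : s r = t m := by
            have : r + (k' + 1) = m := by omega
            simp [hsdef, this]
          rw [hs0, hsr] at keyR
          -- cross term bound
          have hcross : (ENNReal.ofReal |f (t (k' + 1)) - f (t k')|) ^ p
              ≤ C * ((ENNReal.ofReal |f (t (k' + 1))|) ^ p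
                  + (ENNReal.ofReal |f (t k')|) ^ p) := by
            have h1 : ENNReal.ofReal |f (t (k' + 1)) - f (t k')|
                ≤ ENNReal.ofReal |f (t (k' + 1))| + ENNReal.ofReal |f (t k')| := by
              rw [← ENNReal.ofReal_add (abs_nonneg _) (abs_nonneg _)]
              exact ENNReal.ofReal_le_ofReal (abs_sub _ _)
            calc (ENNReal.ofReal |f (t (k' + 1)) - f (t k')|) ^ p
                ≤ (ENNReal.ofReal |f (t (k' + 1))| + ENNReal.ofReal |f (t k')|) ^ p :=
                  ENNReal.rpow_le_rpow h1 hp0.le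
              _ ≤ C * ((ENNReal.ofReal |f (t (k' + 1))|) ^ p
                    + (ENNReal.ofReal |f (t k')|) ^ p) :=
                  ENNReal.rpow_add_le_mul_rpow_add_rpow _ _ hp
          -- sum decomposition
          have hsplit : ∑ i ∈ Finset.range m, (ENNReal.ofReal |f (t (i + 1)) - f (t i)|) ^ p
              = (∑ i ∈ Finset.range k', (ENNReal.ofReal |f (t (i + 1)) - f (t i)|) ^ p)
                + (ENNReal.ofReal |f (t (k' + 1)) - f (t k')|) ^ p
                + ∑ i ∈ Finset.range r, (ENNReal.ofReal |f (s (i + 1)) - f (s i)|) ^ p := by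
            have hm : m = (k' + 1) + r := by omega
            rw [hm, Finset.sum_range_add, Finset.sum_range_succ]
            congr 1
            apply Finset.sum_congr rfl
            intro i _
            have h2 : k' + 1 + i + 1 = i + 1 + (k' + 1) := by ring
            have h1 : k' + 1 + i = i + (k' + 1) := by ring
            simp only [hsdef]
            rw [h2, h1]
          -- combine everything
          rw [hsplit]
          set x0 := (ENNReal.ofReal |f (t 0)|) ^ p with hx0
          set xm := (ENNReal.ofReal |f (t m)|) ^ p with hxm
          set xk := (ENNReal.ofReal |f (t (k' + 1))|) ^ p with hxk
          set xk' := (ENNReal.ofReal |f (t k')|) ^ p with hxk'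
          set SL := ∑ i ∈ Finset.range k', (ENNReal.ofReal |f (t (i + 1)) - f (t i)|) ^ p
            with hSL
          set SR := ∑ i ∈ Finset.range r, (ENNReal.ofReal |f (s (i + 1)) - f (s i)|) ^ p
            with hSR
          have step1 : C * (x0 + xm) + (SL + (ENNReal.ofReal |f (t (k' + 1)) - f (t k')|) ^ p + SR)
              ≤ (C * (x0 + xk') + SL) + (C * (xk + xm) + C * SR) := by
            calc C * (x0 + xm) + (SL + (ENNReal.ofReal |f (t (k' + 1)) - f (t k')|) ^ p + SR)
                ≤ C * (x0 + xm) + (SL + C * (xk + xk') + SR) := by gcongr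
              _ ≤ C * (x0 + xm) + (SL + C * (xk + xk') + C * SR) := by
                  gcongr
                  exact le_mul_of_one_le_left zero_le hC
              _ = (C * (x0 + xk') + SL) + (C * (xk + xm) + C * SR) := by ring
          refine (step1.trans ?_)
          have hL : C * (x0 + xk') + SL
              ≤ C * ∑ j ∈ Finset.range n, pVar p f (Icc (a j) (a (j + 1))) ^ p := keyL
          have hR : C * (xk + xm) + C * SR ≤ C * pVar p f (Icc (a n) (a (n + 1))) ^ p := by
            have : C * (xk + xm) + C * SR = C * (xk + SR + xm) := by ring
            rw [this]
            gcongr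
          calc (C * (x0 + xk') + SL) + (C * (xk + xm) + C * SR)
              ≤ C * (∑ j ∈ Finset.range n, pVar p f (Icc (a j) (a (j + 1))) ^ p)
                + C * pVar p f (Icc (a n) (a (n + 1))) ^ p := add_le_add hL hR
            _ = C * ∑ j ∈ Finset.range (n + 1), pVar p f (Icc (a j) (a (j + 1))) ^ p := by
                rw [Finset.sum_range_succ, mul_add]

end PVarSub

/-- Subadditivity of the strong `p`-variation with constant `2^{1-1/p}` along a partition
at whose points `f` vanishes:
`V_p(f;[a₀,a_n]) ≤ 2^{1-1/p} (Σ_{i=1}^n V_p(f;[a_{i-1},a_i])^p)^{1/p}`. -/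
theorem pVar_subadditive (p : ℝ) (hp : 1 ≤ p) (n : ℕ) (hn : 0 < n) (a : ℕ → ℝ)
    (ha : ∀ i < n, a i < a (i + 1)) (f : ℝ → ℝ) (hf : ∀ i ≤ n, f (a i) = 0) :
    pVar p f (Set.Icc (a 0) (a n)) ≤
      ENNReal.ofReal (2 ^ (1 - 1/p)) *
        (∑ i ∈ Finset.range n, pVar p f (Set.Icc (a i) (a (i + 1))) ^ p) ^ (1 / p) := by
  have hp0 : (0 : ℝ) < p := lt_of_lt_of_le one_pos hp
  set T := ∑ i ∈ Finset.range n, pVar p f (Set.Icc (a i) (a (i + 1))) ^ p with hT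
  have hconst : ENNReal.ofReal (2 ^ (1 - 1/p)) = (2 : ℝ≥0∞) ^ (1 - 1/p) := by
    rw [← ENNReal.ofReal_rpow_of_pos two_pos]
    norm_num
  rw [hconst]
  rw [pVar]
  refine iSup_le fun m => iSup_le fun t => iSup_le fun ht => iSup_le fun hmono => ?_
  have key := PVarSub.main_ind hp f n hn a ha hf m t ht hmono
  have hS : ∑ i ∈ Finset.range m, (ENNReal.ofReal |f (t (i + 1)) - f (t i)|) ^ p
      ≤ (2 : ℝ≥0∞) ^ (p - 1) * T := le_trans (self_le_add_left _ _) key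
  calc (∑ i ∈ Finset.range m, (ENNReal.ofReal |f (t (i + 1)) - f (t i)|) ^ p) ^ (1 / p)
      ≤ ((2 : ℝ≥0∞) ^ (p - 1) * T) ^ (1 / p) := ENNReal.rpow_le_rpow hS (by positivity)
    _ = ((2 : ℝ≥0∞) ^ (p - 1)) ^ (1 / p) * T ^ (1 / p) :=
        ENNReal.mul_rpow_of_nonneg _ _ (by positivity)
    _ = (2 : ℝ≥0∞) ^ (1 - 1/p) * T ^ (1 / p) := by
        rw [← ENNReal.rpow_mul]
        congr 1
        field_simp
end
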